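/- arXiv:2605.11399 — 14 statements merged into one kernel-verified Lean document; each statement's English description precedes it below -/
import Mathlib

section
/- For every real time t, the battery population satisfies p(t) = |α(t)|² = (1 + cos((e₁ − e₂)t) + 2Δ²/J₁²)/(2 + 2Δ²/J₁²), and consequently 1 − p(t) = |β(t)|² = (1 − cos((e₁ − e₂)t))/(2 + 2Δ²/J₁²). -/
open Complex

lemma exp_negI (θ : ℝ) : Complex.exp (-Complex.I * (θ : ℂ)) =
    ((Real.cos θ : ℝ) : ℂ) - ((Real.sin θ : ℝ) : ℂ) * Complex.I := by
  rw [show (-Complex.I * (θ : ℂ)) = ((-θ : ℝ) : ℂ) * Complex.I by push_cast; ring,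
    Complex.exp_mul_I]
  push_cast
  rw [Complex.cos_neg, Complex.sin_neg, ← Complex.ofReal_cos, ← Complex.ofReal_sin]
  ring

/-- For every real time `t`, the battery population satisfies
`p(t) = |α(t)|² = (1 + cos((e₁−e₂)t) + 2Δ²/J₁²)/(2 + 2Δ²/J₁²)`, and consequently
`1 − p(t) = |β(t)|² = (1 − cos((e₁−e₂)t))/(2 + 2Δ²/J₁²)`. -/
theorem stmt_0 (ωb ωc J1 J2 t : ℝ) (hωb : 0 < ωb) (hωc : 0 < ωc) (hJ1 : J1 ≠ 0)
    (Δ Ω e1 e2 ξ1 ξ2 p : ℝ) (α β : ℂ)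
    (hΔ : Δ = ωb - ωc) (hΩ : Ω = Real.sqrt (J1 ^ 2 + Δ ^ 2))
    (he1 : e1 = Ω - J2) (he2 : e2 = -Ω - J2)
    (hξ1 : ξ1 = (Δ + Ω) / J1) (hξ2 : ξ2 = (Δ - Ω) / J1)
    (hα : α = (Complex.exp (-Complex.I * ((e1 * t : ℝ) : ℂ)) * (ξ1 : ℂ) -
        Complex.exp (-Complex.I * ((e2 * t : ℝ) : ℂ)) * (ξ2 : ℂ)) / ((ξ1 : ℂ) - (ξ2 : ℂ)))
    (hβ : β = (Complex.exp (-Complex.I * ((e1 * t : ℝ) : ℂ)) -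
        Complex.exp (-Complex.I * ((e2 * t : ℝ) : ℂ))) / ((ξ1 : ℂ) - (ξ2 : ℂ)))
    (hp : p = ‖α‖ ^ 2) :
    p = (1 + Real.cos ((e1 - e2) * t) + 2 * Δ ^ 2 / J1 ^ 2) / (2 + 2 * Δ ^ 2 / J1 ^ 2) ∧
    1 - p = ‖β‖ ^ 2 ∧
    1 - p = (1 - Real.cos ((e1 - e2) * t)) / (2 + 2 * Δ ^ 2 / J1 ^ 2) := by
  have hJ1sq : (0:ℝ) < J1 ^ 2 := by positivity
  have hΩpos : 0 < Ω := by
    rw [hΩ]; apply Real.sqrt_pos.2; positivity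
  have hΩsq : Ω ^ 2 = J1 ^ 2 + Δ ^ 2 := by
    rw [hΩ]; exact Real.sq_sqrt (by positivity)
  have hcos : Real.cos ((e1 - e2) * t) =
      Real.cos (e1 * t) * Real.cos (e2 * t) + Real.sin (e1 * t) * Real.sin (e2 * t) := by
    rw [sub_mul, Real.cos_sub]
  have hd : ξ1 - ξ2 = 2 * Ω / J1 := by rw [hξ1, hξ2]; field_simp; ring
  have hdne : ξ1 - ξ2 ≠ 0 := by rw [hd]; positivity
  have hdC : ((ξ1 : ℂ) - (ξ2 : ℂ)) = ((ξ1 - ξ2 : ℝ) : ℂ) := by push_cast; ring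
  have hDen : (0:ℝ) < 2 + 2 * Δ ^ 2 / J1 ^ 2 := by positivity
  have hsum : ξ1 ^ 2 + ξ2 ^ 2 = 2 + 4 * Δ ^ 2 / J1 ^ 2 := by
    rw [hξ1, hξ2]; field_simp; linear_combination 2 * hΩsq
  have hprod : ξ1 * ξ2 = -1 := by
    rw [hξ1, hξ2]; field_simp; linear_combination -hΩsq
  have hdiff : (ξ1 - ξ2) ^ 2 = 2 * (2 + 2 * Δ ^ 2 / J1 ^ 2) := by
    rw [hd]; field_simp; linear_combination hΩsq
  have h1s := Real.sin_sq_add_cos_sq (e1 * t)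
  have h2s := Real.sin_sq_add_cos_sq (e2 * t)
  have hnumα : Complex.normSq (Complex.exp (-Complex.I * ((e1 * t : ℝ) : ℂ)) * (ξ1 : ℂ) -
      Complex.exp (-Complex.I * ((e2 * t : ℝ) : ℂ)) * (ξ2 : ℂ)) =
      ξ1 ^ 2 + ξ2 ^ 2 - 2 * (ξ1 * ξ2) * Real.cos ((e1 - e2) * t) := by
    rw [exp_negI, exp_negI, Complex.normSq_apply]
    simp only [Complex.sub_re, Complex.sub_im, Complex.mul_re, Complex.mul_im,
      Complex.ofReal_re, Complex.ofReal_im, Complex.I_re, Complex.I_im]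
    linear_combination ξ1 ^ 2 * h1s + ξ2 ^ 2 * h2s + 2 * ξ1 * ξ2 * hcos
  have hnumβ : Complex.normSq (Complex.exp (-Complex.I * ((e1 * t : ℝ) : ℂ)) -
      Complex.exp (-Complex.I * ((e2 * t : ℝ) : ℂ))) =
      2 - 2 * Real.cos ((e1 - e2) * t) := by
    rw [exp_negI, exp_negI, Complex.normSq_apply]
    simp only [Complex.sub_re, Complex.sub_im, Complex.mul_re, Complex.mul_im,
      Complex.ofReal_re, Complex.ofReal_im, Complex.I_re, Complex.I_im]
    linear_combination h1s + h2s + 2 * hcos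
  have hpval : p = (ξ1 ^ 2 + ξ2 ^ 2 - 2 * (ξ1 * ξ2) * Real.cos ((e1 - e2) * t)) /
      (ξ1 - ξ2) ^ 2 := by
    rw [hp, hα, hdC, Complex.sq_norm, map_div₀ Complex.normSq, hnumα, Complex.normSq_ofReal,
      ← sq]
  have hβval : ‖β‖ ^ 2 = (1 - Real.cos ((e1 - e2) * t)) / (2 + 2 * Δ ^ 2 / J1 ^ 2) := by
    rw [hβ, hdC, Complex.sq_norm, map_div₀ Complex.normSq, hnumβ, Complex.normSq_ofReal, ← sq,
      hdiff]
    rw [div_eq_div_iff (by positivity) hDen.ne']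
    ring
  have h1 : p = (1 + Real.cos ((e1 - e2) * t) + 2 * Δ ^ 2 / J1 ^ 2) /
      (2 + 2 * Δ ^ 2 / J1 ^ 2) := by
    rw [hpval, hsum, hprod, hdiff, div_eq_div_iff (by positivity) hDen.ne']
    ring
  have h3 : 1 - p = (1 - Real.cos ((e1 - e2) * t)) / (2 + 2 * Δ ^ 2 / J1 ^ 2) := by
    rw [h1, eq_div_iff hDen.ne', sub_mul, div_mul_cancel₀ _ hDen.ne']
    ring
  exact ⟨h1, by rw [h3, hβval], h3⟩
end

section
/- (Theorem 1) For every real time t, the battery capacity and the battery–charger entanglement satisfy C_b(t) = 2 ω_b √(1 − E(t)²); in particular the battery capacity decreases monotonically as the entanglement increases. -/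
open Complex

theorem stmt_3 (ωb ωc J1 J2 t : ℝ) (hωb : 0 < ωb) (hωc : 0 < ωc) (hJ1 : J1 ≠ 0)
    (Δ Ω e1 e2 ξ1 ξ2 p : ℝ) (α β : ℂ)
    (hΔ : Δ = ωb - ωc) (hΩ : Ω = Real.sqrt (J1 ^ 2 + Δ ^ 2))
    (he1 : e1 = Ω - J2) (he2 : e2 = -Ω - J2)
    (hξ1 : ξ1 = (Δ + Ω) / J1) (hξ2 : ξ2 = (Δ - Ω) / J1)
    (hα : α = (Complex.exp (-Complex.I * ((e1 * t : ℝ) : ℂ)) * (ξ1 : ℂ) -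
        Complex.exp (-Complex.I * ((e2 * t : ℝ) : ℂ)) * (ξ2 : ℂ)) / ((ξ1 : ℂ) - (ξ2 : ℂ)))
    (hβ : β = (Complex.exp (-Complex.I * ((e1 * t : ℝ) : ℂ)) -
        Complex.exp (-Complex.I * ((e2 * t : ℝ) : ℂ))) / ((ξ1 : ℂ) - (ξ2 : ℂ)))
    (hp : p = ‖α‖ ^ 2)
    (E Cb : ℝ)
    (hE : E = 2 * ‖α‖ * ‖β‖)
    (hCb : Cb = 2 * ωb * |1 - 2 * p|) :
    Cb = 2 * ωb * Real.sqrt (1 - E ^ 2) := by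
  set a := Complex.exp (-Complex.I * ((e1 * t : ℝ) : ℂ)) with ha
  set b := Complex.exp (-Complex.I * ((e2 * t : ℝ) : ℂ)) with hb
  have hΩsq : Ω ^ 2 = J1 ^ 2 + Δ ^ 2 := by
    rw [hΩ]; exact Real.sq_sqrt (by positivity)
  have hΩpos : 0 < Ω := by
    rw [hΩ]; apply Real.sqrt_pos.2
    have : 0 < J1 ^ 2 := by positivity
    nlinarith [sq_nonneg Δ]
  have hξmul : ξ1 * ξ2 = -1 := by
    rw [hξ1, hξ2]
    field_simp
    nlinarith [hΩsq]
  have hξsub : ξ1 - ξ2 = 2 * Ω / J1 := by rw [hξ1, hξ2]; ring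
  have hξne : ξ1 - ξ2 ≠ 0 := by
    rw [hξsub]; exact div_ne_zero (by positivity) hJ1
  have hna : Complex.normSq a = 1 := by
    rw [ha, ← Complex.sq_norm, Complex.norm_exp]
    simp [Complex.mul_re]
  have hnb : Complex.normSq b = 1 := by
    rw [hb, ← Complex.sq_norm, Complex.norm_exp]
    simp [Complex.mul_re]
  set c := Real.cos ((e2 - e1) * t) with hc
  have hre : (a * (starRingEnd ℂ) b).re = c := by
    rw [ha, hb, ← Complex.exp_conj, ← Complex.exp_add]
    have h : -Complex.I * ((e1 * t : ℝ) : ℂ) +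
        (starRingEnd ℂ) (-Complex.I * ((e2 * t : ℝ) : ℂ)) = (((e2 - e1) * t : ℝ) : ℂ) * Complex.I := by
      simp [map_mul, Complex.conj_ofReal]
      push_cast
      ring
    rw [h, Complex.exp_ofReal_mul_I_re]
  have hnum1 : Complex.normSq (a * (ξ1 : ℂ) - b * (ξ2 : ℂ)) =
      ξ1 ^ 2 + ξ2 ^ 2 - 2 * (ξ1 * ξ2) * c := by
    rw [Complex.normSq_sub]
    have h1 : a * (ξ1 : ℂ) * (starRingEnd ℂ) (b * (ξ2 : ℂ)) =
        a * (starRingEnd ℂ) b * ((ξ1 * ξ2 : ℝ) : ℂ) := by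
      simp [map_mul, Complex.conj_ofReal]
      push_cast
      ring
    rw [h1]
    simp [map_mul, Complex.normSq_ofReal, hna, hnb, Complex.mul_re, hre]
    ring
  have hnum2 : Complex.normSq (a - b) = 2 - 2 * c := by
    rw [Complex.normSq_sub, hna, hnb, hre]
    ring
  have hden : Complex.normSq ((ξ1 : ℂ) - (ξ2 : ℂ)) = (ξ1 - ξ2) ^ 2 := by
    rw [← Complex.ofReal_sub, Complex.normSq_ofReal]
    ring
  have hsum : ‖α‖ ^ 2 + ‖β‖ ^ 2 = 1 := by
    rw [hα, hβ, Complex.sq_norm, Complex.sq_norm, map_div₀, map_div₀, hnum1, hnum2, hden]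
    have hkey : ξ1 ^ 2 + ξ2 ^ 2 - 2 * (ξ1 * ξ2) * c + (2 - 2 * c) = (ξ1 - ξ2) ^ 2 := by
      linear_combination (2 - 2 * c) * hξmul
    field_simp
    linarith [hkey]
  have hq : ‖β‖ ^ 2 = 1 - p := by rw [hp]; linarith
  have hE2 : 1 - E ^ 2 = (1 - 2 * p) ^ 2 := by
    rw [hE]
    have : (2 * ‖α‖ * ‖β‖) ^ 2 =
        4 * (‖α‖ ^ 2) * (‖β‖ ^ 2) := by ring
    rw [this, ← hp, hq]
    ring
  rw [hCb, hE2, Real.sqrt_sq_eq_abs]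
end

section
/- (Theorem 2) For every real time t, the sum of the battery and charger capacities is bounded by the total system capacity: 2 ω_b |1 − 2 p(t)| + 2 ω_c |1 − 2 p(t)| ≤ ε₄ − ε₁, where ε₁ and ε₄ are the smallest and largest eigenvalues of the full Hamiltonian H. -/
open Complex

theorem stmt_4 (ωb ωc J1 J2 t : ℝ) (hωb : 0 < ωb) (hωc : 0 < ωc) (hJ1 : J1 ≠ 0)
    (Δ Ω e1 e2 ξ1 ξ2 p : ℝ) (α β : ℂ)
    (hΔ : Δ = ωb - ωc) (hΩ : Ω = Real.sqrt (J1 ^ 2 + Δ ^ 2))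
    (he1 : e1 = Ω - J2) (he2 : e2 = -Ω - J2)
    (hξ1 : ξ1 = (Δ + Ω) / J1) (hξ2 : ξ2 = (Δ - Ω) / J1)
    (hα : α = (Complex.exp (-Complex.I * ((e1 * t : ℝ) : ℂ)) * (ξ1 : ℂ) -
        Complex.exp (-Complex.I * ((e2 * t : ℝ) : ℂ)) * (ξ2 : ℂ)) / ((ξ1 : ℂ) - (ξ2 : ℂ)))
    (hβ : β = (Complex.exp (-Complex.I * ((e1 * t : ℝ) : ℂ)) -
        Complex.exp (-Complex.I * ((e2 * t : ℝ) : ℂ))) / ((ξ1 : ℂ) - (ξ2 : ℂ)))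
    (hp : p = ‖α‖ ^ 2)
    (ε1 ε4 : ℝ)
    (hε1 : ε1 = min (min (Ω - J2) (-Ω - J2)) (min (J2 + (ωb + ωc)) (J2 - (ωb + ωc))))
    (hε4 : ε4 = max (max (Ω - J2) (-Ω - J2)) (max (J2 + (ωb + ωc)) (J2 - (ωb + ωc)))) :
    2 * ωb * |1 - 2 * p| + 2 * ωc * |1 - 2 * p| ≤ ε4 - ε1 := by
  have hJ1sq : 0 < J1 ^ 2 := by positivity
  have hΩpos : 0 < Ω := by
    rw [hΩ]; exact Real.sqrt_pos.2 (by positivity)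
  have hΩsq : Ω ^ 2 = J1 ^ 2 + Δ ^ 2 := by
    rw [hΩ]; exact Real.sq_sqrt (by positivity)
  have hprod : ξ1 * ξ2 = -1 := by
    rw [hξ1, hξ2]; field_simp; nlinarith [hΩsq]
  have hdne : ξ1 - ξ2 ≠ 0 := by
    have : ξ1 - ξ2 = 2 * Ω / J1 := by rw [hξ1, hξ2]; field_simp; ring
    rw [this]; exact div_ne_zero (by positivity) hJ1
  have hexp1 : -Complex.I * ((e1 * t : ℝ) : ℂ) = ((-(e1 * t) : ℝ) : ℂ) * Complex.I := by
    push_cast; ring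
  have hexp2 : -Complex.I * ((e2 * t : ℝ) : ℂ) = ((-(e2 * t) : ℝ) : ℂ) * Complex.I := by
    push_cast; ring
  have hαval : α = (((Real.cos (e1 * t) * ξ1 - Real.cos (e2 * t) * ξ2) / (ξ1 - ξ2) : ℝ) : ℂ)
      + (((-Real.sin (e1 * t) * ξ1 + Real.sin (e2 * t) * ξ2) / (ξ1 - ξ2) : ℝ) : ℂ) * Complex.I := by
    have hdC : ((ξ1 : ℂ) - (ξ2 : ℂ)) ≠ 0 := by
      rw [← Complex.ofReal_sub]
      exact_mod_cast Complex.ofReal_ne_zero.2 hdne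
    rw [hα, hexp1, hexp2, Complex.exp_mul_I, Complex.exp_mul_I]
    simp only [← Complex.ofReal_cos, ← Complex.ofReal_sin, Real.cos_neg, Real.sin_neg]
    field_simp
    push_cast
    field_simp
    ring
  have hpval : p = ((Real.cos (e1 * t) * ξ1 - Real.cos (e2 * t) * ξ2) / (ξ1 - ξ2)) ^ 2
      + ((-Real.sin (e1 * t) * ξ1 + Real.sin (e2 * t) * ξ2) / (ξ1 - ξ2)) ^ 2 := by
    rw [hp, Complex.sq_norm, hαval, Complex.normSq_apply]
    simp only [Complex.add_re, Complex.add_im, Complex.mul_re, Complex.mul_im,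
      Complex.ofReal_re, Complex.ofReal_im, Complex.I_re, Complex.I_im]
    ring
  have hp0 : 0 ≤ p := by rw [hpval]; positivity
  have hp1 : p ≤ 1 := by
    rw [hpval]
    rw [div_pow, div_pow, ← add_div, div_le_one (by positivity : (0:ℝ) < (ξ1 - ξ2)^2)]
    have hs1 := Real.sin_sq_add_cos_sq (e1 * t)
    have hs2 := Real.sin_sq_add_cos_sq (e2 * t)
    have key : (Real.cos (e1 * t) * ξ1 - Real.cos (e2 * t) * ξ2) ^ 2
        + (-Real.sin (e1 * t) * ξ1 + Real.sin (e2 * t) * ξ2) ^ 2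
        = ξ1 ^ 2 + ξ2 ^ 2 + 2 * Real.cos (e1 * t - e2 * t) := by
      linear_combination ξ1 ^ 2 * hs1 + ξ2 ^ 2 * hs2
        + (-2 * (Real.cos (e1 * t) * Real.cos (e2 * t)
            + Real.sin (e1 * t) * Real.sin (e2 * t))) * hprod
        - 2 * (Real.cos_sub (e1 * t) (e2 * t))
    rw [key]
    nlinarith [Real.cos_le_one (e1 * t - e2 * t), hprod]
  have habs : |1 - 2 * p| ≤ 1 := by
    rw [abs_le]; constructor <;> linarith
  have hε4ge : J2 + (ωb + ωc) ≤ ε4 := by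
    rw [hε4]; exact le_max_of_le_right (le_max_left _ _)
  have hε1le : ε1 ≤ J2 - (ωb + ωc) := by
    rw [hε1]; exact min_le_of_right_le (min_le_right _ _)
  nlinarith [mul_le_of_le_one_right (by positivity : (0:ℝ) ≤ 2 * ωb) habs,
    mul_le_of_le_one_right (by positivity : (0:ℝ) ≤ 2 * ωc) habs]
end

section
/- (Theorem 3) For every real time t, the residual battery capacity R(t) := (ε₄ − ε₁) − 2 ω_b |1 − 2 p(t)| − 2 ω_c |1 − 2 p(t)| satisfies R(t) = ε₄ − ε₁ − 2(ω_b + ω_c)√(1 − E(t)²); in particular R(t) increases monotonically with the battery–charger entanglement E(t). -/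
open Complex

theorem stmt_5 (ωb ωc J1 J2 t : ℝ) (hωb : 0 < ωb) (hωc : 0 < ωc) (hJ1 : J1 ≠ 0)
    (Δ Ω e1 e2 ξ1 ξ2 p : ℝ) (α β : ℂ)
    (hΔ : Δ = ωb - ωc) (hΩ : Ω = Real.sqrt (J1 ^ 2 + Δ ^ 2))
    (he1 : e1 = Ω - J2) (he2 : e2 = -Ω - J2)
    (hξ1 : ξ1 = (Δ + Ω) / J1) (hξ2 : ξ2 = (Δ - Ω) / J1)
    (hα : α = (Complex.exp (-Complex.I * ((e1 * t : ℝ) : ℂ)) * (ξ1 : ℂ) -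
        Complex.exp (-Complex.I * ((e2 * t : ℝ) : ℂ)) * (ξ2 : ℂ)) / ((ξ1 : ℂ) - (ξ2 : ℂ)))
    (hβ : β = (Complex.exp (-Complex.I * ((e1 * t : ℝ) : ℂ)) -
        Complex.exp (-Complex.I * ((e2 * t : ℝ) : ℂ))) / ((ξ1 : ℂ) - (ξ2 : ℂ)))
    (hp : p = ‖α‖ ^ 2)
    (ε1 ε4 E R : ℝ)
    (hε1 : ε1 = min (min (Ω - J2) (-Ω - J2)) (min (J2 + (ωb + ωc)) (J2 - (ωb + ωc))))
    (hε4 : ε4 = max (max (Ω - J2) (-Ω - J2)) (max (J2 + (ωb + ωc)) (J2 - (ωb + ωc))))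
    (hE : E = 2 * ‖α‖ * ‖β‖)
    (hR : R = (ε4 - ε1) - 2 * ωb * |1 - 2 * p| - 2 * ωc * |1 - 2 * p|) :
    R = ε4 - ε1 - 2 * (ωb + ωc) * Real.sqrt (1 - E ^ 2) := by
  have hΩpos : 0 < Ω := by
    rw [hΩ]
    exact Real.sqrt_pos.mpr (by positivity)
  have hΩ2 : Ω ^ 2 = J1 ^ 2 + Δ ^ 2 := by
    rw [hΩ]; exact Real.sq_sqrt (by positivity)
  have hprod : ξ1 * ξ2 = -1 := by
    rw [hξ1, hξ2, div_mul_div_comm,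
      show (Δ + Ω) * (Δ - Ω) = Δ ^ 2 - Ω ^ 2 by ring, hΩ2,
      show Δ ^ 2 - (J1 ^ 2 + Δ ^ 2) = -(J1 * J1) by ring, neg_div,
      div_self (mul_ne_zero hJ1 hJ1)]
  have hdiff : ξ1 - ξ2 ≠ 0 := by
    rw [hξ1, hξ2, div_sub_div_same]
    have : Δ + Ω - (Δ - Ω) = 2 * Ω := by ring
    rw [this]
    exact div_ne_zero (by positivity) hJ1
  set a := Complex.exp (-Complex.I * ((e1 * t : ℝ) : ℂ)) with ha
  set b := Complex.exp (-Complex.I * ((e2 * t : ℝ) : ℂ)) with hb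
  have h1 : a.re ^ 2 + a.im ^ 2 = 1 := by
    have : ‖a‖ = 1 := by
      rw [ha, Complex.norm_exp]
      simp
    have h2 := Complex.sq_norm a
    rw [this, Complex.normSq_apply] at h2
    linear_combination -h2
  have h2 : b.re ^ 2 + b.im ^ 2 = 1 := by
    have : ‖b‖ = 1 := by
      rw [hb, Complex.norm_exp]
      simp
    have h2 := Complex.sq_norm b
    rw [this, Complex.normSq_apply] at h2
    linear_combination -h2
  have hdC : ((ξ1 : ℂ) - (ξ2 : ℂ)) ≠ 0 := by
    rw [← Complex.ofReal_sub]
    exact_mod_cast Complex.ofReal_ne_zero.mpr hdiff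
  have hnormden : Complex.normSq ((ξ1 : ℂ) - (ξ2 : ℂ)) ≠ 0 := (Complex.normSq_pos.mpr hdC).ne'
  have hnorm : Complex.normSq α + Complex.normSq β = 1 := by
    rw [hα, hβ, map_div₀, map_div₀, ← add_div, div_eq_one_iff_eq hnormden]
    simp only [Complex.normSq_apply, Complex.sub_re, Complex.sub_im, Complex.mul_re,
      Complex.mul_im, Complex.ofReal_re, Complex.ofReal_im]
    ring_nf
    linear_combination (ξ1 ^ 2 + 1) * h1 + (ξ2 ^ 2 + 1) * h2 +
      (2 - 2 * (a.re * b.re + a.im * b.im)) * hprod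
  have hpa : ‖α‖ ^ 2 = p := hp.symm
  have hpb : ‖β‖ ^ 2 = 1 - p := by
    have := Complex.sq_norm α
    have h2 := Complex.sq_norm β
    rw [hp]
    rw [Complex.sq_norm, Complex.sq_norm]
    linarith [hnorm, this]
  have hE2 : 1 - E ^ 2 = (1 - 2 * p) ^ 2 := by
    have : E ^ 2 = 4 * (‖α‖ ^ 2) * (‖β‖ ^ 2) := by rw [hE]; ring
    rw [this, hpa, hpb]; ring
  have hsq : Real.sqrt (1 - E ^ 2) = |1 - 2 * p| := by
    rw [hE2, Real.sqrt_sq_eq_abs]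
  rw [hR, hsq]
  ring
end

section
/- (Theorem 5) For every real time t, the three-setting linear steering measure S(t) := Tr(T(t) T(t)ᵀ) − 1 of the evolved state satisfies S(t) = 8|α(t)|²|β(t)|² = 2E(t)², and the battery capacity satisfies C_b(t) = 2 ω_b √(1 − S(t)/2). -/
open Complex Matrix Kronecker

/-- Theorem 5: the steering measure `S(t) = Tr(T Tᵀ) − 1` satisfies
`S = 8|α|²|β|² = 2E²` and `C_b = 2ω_b √(1 − S/2)`. -/
theorem stmt_8 (ωb ωc J1 J2 t : ℝ) (hωb : 0 < ωb) (hωc : 0 < ωc) (hJ1 : J1 ≠ 0)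
    (Δ Ω e1 e2 ξ1 ξ2 p : ℝ) (α β : ℂ)
    (hΔ : Δ = ωb - ωc) (hΩ : Ω = Real.sqrt (J1 ^ 2 + Δ ^ 2))
    (he1 : e1 = Ω - J2) (he2 : e2 = -Ω - J2)
    (hξ1 : ξ1 = (Δ + Ω) / J1) (hξ2 : ξ2 = (Δ - Ω) / J1)
    (hα : α = (Complex.exp (-Complex.I * ((e1 * t : ℝ) : ℂ)) * (ξ1 : ℂ) -
        Complex.exp (-Complex.I * ((e2 * t : ℝ) : ℂ)) * (ξ2 : ℂ)) / ((ξ1 : ℂ) - (ξ2 : ℂ)))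
    (hβ : β = (Complex.exp (-Complex.I * ((e1 * t : ℝ) : ℂ)) -
        Complex.exp (-Complex.I * ((e2 * t : ℝ) : ℂ))) / ((ξ1 : ℂ) - (ξ2 : ℂ)))
    (hp : p = ‖α‖ ^ 2)
    (E Cb : ℝ)
    (hE : E = 2 * ‖α‖ * ‖β‖)
    (hCb : Cb = 2 * ωb * |1 - 2 * p|)
    (ψ : Fin 2 × Fin 2 → ℂ)
    (hψ : ψ = fun x => if x = (0, 1) then α else if x = (1, 0) then β else 0)
    (ρ : Matrix (Fin 2 × Fin 2) (Fin 2 × Fin 2) ℂ)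
    (hρ : ρ = Matrix.of fun i j => ψ i * star (ψ j))
    (σ : Fin 3 → Matrix (Fin 2) (Fin 2) ℂ)
    (hσ : σ = ![!![0, 1; 1, 0], !![0, -Complex.I; Complex.I, 0], !![1, 0; 0, -1]])
    (T : Matrix (Fin 3) (Fin 3) ℝ)
    (hT : ∀ i j : Fin 3, (T i j : ℂ) = (ρ * (σ i ⊗ₖ σ j)).trace)
    (S : ℝ) (hS : S = (T * Tᵀ).trace - 1) :
    S = 8 * ‖α‖ ^ 2 * ‖β‖ ^ 2 ∧
    S = 2 * E ^ 2 ∧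
    Cb = 2 * ωb * Real.sqrt (1 - S / 2) := by
  -- normalization
  have hpos : (0:ℝ) < J1 ^ 2 + Δ ^ 2 := by positivity
  have hΩsq : Ω ^ 2 = J1 ^ 2 + Δ ^ 2 := by rw [hΩ]; exact Real.sq_sqrt hpos.le
  have hΩpos : 0 < Ω := by rw [hΩ]; exact Real.sqrt_pos.mpr hpos
  have hprod : ξ1 * ξ2 = -1 := by
    rw [hξ1, hξ2]; field_simp; linear_combination -hΩsq
  have hne : ξ1 - ξ2 ≠ 0 := by
    rw [hξ1, hξ2]
    rw [div_sub_div_same]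
    have : Δ + Ω - (Δ - Ω) = 2 * Ω := by ring
    rw [this]
    exact div_ne_zero (by positivity) hJ1
  set u := Complex.exp (-Complex.I * ((e1 * t : ℝ) : ℂ)) with hu
  set v := Complex.exp (-Complex.I * ((e2 * t : ℝ) : ℂ)) with hv
  have hun : Complex.normSq u = 1 := by
    rw [hu, Complex.normSq_eq_norm_sq, Complex.norm_exp]; simp
  have hvn : Complex.normSq v = 1 := by
    rw [hv, Complex.normSq_eq_norm_sq, Complex.norm_exp]; simp
  have hun' : u.re ^ 2 + u.im ^ 2 = 1 := by
    rw [← hun, Complex.normSq_apply]; ring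
  have hvn' : v.re ^ 2 + v.im ^ 2 = 1 := by
    rw [← hvn, Complex.normSq_apply]; ring
  have hdenC : ((ξ1 : ℂ) - ξ2) ≠ 0 := by
    rw [← Complex.ofReal_sub]; exact_mod_cast hne
  have hden : Complex.normSq ((ξ1 : ℂ) - ξ2) = (ξ1 - ξ2) ^ 2 := by
    rw [← Complex.ofReal_sub, Complex.normSq_ofReal]; ring
  have hn : Complex.normSq α + Complex.normSq β = 1 := by
    rw [hα, hβ, Complex.normSq_div, Complex.normSq_div, ← add_div, hden,
      div_eq_one_iff_eq (by positivity)]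
    simp only [Complex.normSq_apply, Complex.sub_re, Complex.sub_im, Complex.mul_re,
      Complex.mul_im, Complex.ofReal_re, Complex.ofReal_im]
    linear_combination (ξ1 ^ 2 + 1) * hun' + (ξ2 ^ 2 + 1) * hvn' +
      (2 - 2 * (u.re * v.re + u.im * v.im)) * hprod
  -- the correlation matrix
  set z := α * (starRingEnd ℂ) β with hz
  have hTval : T = !![2 * z.re, 2 * z.im, 0; -2 * z.im, 2 * z.re, 0; 0, 0, -1] := by
    ext i j
    fin_cases i <;> fin_cases j <;>
      (apply Complex.ofReal_inj.mp; rw [hT _ _]) <;>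
      simp [hρ, hψ, hσ, Matrix.trace, Matrix.mul_apply, kroneckerMap_apply,
        Fintype.sum_prod_type, Fin.sum_univ_succ, Prod.ext_iff]
    · have h := Complex.add_conj z; push_cast at h ⊢
      simp only [hz, _root_.map_mul, Complex.conj_conj] at h; linear_combination h
    · have h := Complex.sub_conj z; push_cast at h ⊢
      simp only [hz, _root_.map_mul, Complex.conj_conj] at h
      linear_combination (-Complex.I) * h + (-2 * (z.im : ℂ)) * Complex.I_sq
    · have h := Complex.sub_conj z; push_cast at h ⊢
      simp only [hz, _root_.map_mul, Complex.conj_conj] at h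
      linear_combination Complex.I * h + (2 * (z.im : ℂ)) * Complex.I_sq
    · have h := Complex.add_conj z; push_cast at h ⊢
      simp only [hz, _root_.map_mul, Complex.conj_conj] at h; linear_combination h
    · have h1 := Complex.mul_conj α
      have h2 := Complex.mul_conj β
      have h3 : ((Complex.normSq α + Complex.normSq β : ℝ) : ℂ) = 1 := by
        rw [hn]; simp
      push_cast at h1 h2 h3 ⊢
      linear_combination -h1 - h2 - h3
  have hzsq : z.re ^ 2 + z.im ^ 2 = Complex.normSq α * Complex.normSq β := by
    have : Complex.normSq z = Complex.normSq α * Complex.normSq β := by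
      rw [hz, Complex.normSq_mul, Complex.normSq_conj]
    rw [← this, Complex.normSq_apply]; ring
  have hSval : S = 8 * Complex.normSq α * Complex.normSq β := by
    have hTt : Tᵀ = !![2 * z.re, -(2 * z.im), 0; 2 * z.im, 2 * z.re, 0; 0, 0, -1] := by
      rw [hTval]; ext i j; fin_cases i <;> fin_cases j <;> simp
    rw [hS, hTt, hTval, Matrix.trace_fin_three]
    simp [Matrix.mul_apply, Fin.sum_univ_three]
    linear_combination 8 * hzsq
  have habs : ‖α‖ ^ 2 = Complex.normSq α := Complex.sq_norm α
  have habsb : ‖β‖ ^ 2 = Complex.normSq β := Complex.sq_norm β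
  refine ⟨by rw [hSval, habs, habsb], ?_, ?_⟩
  · rw [hSval, hE]; rw [← habs, ← habsb] ; ring
  · have h14 : 1 - S / 2 = (1 - 2 * p) ^ 2 := by
      rw [hSval, hp, habs]
      linear_combination (-4 * Complex.normSq α) * hn
    rw [hCb, h14, Real.sqrt_sq_eq_abs]
end

section
/- (Theorem 6) For every real time t, the Bell-nonlocality measure B(t) := 2√(ι₁ + ι₂) − 2, where ι₁ ≥ ι₂ are the two largest eigenvalues of T(t) T(t)ᵀ, satisfies B(t) = 2√(1 + 4|α(t)|²|β(t)|²) − 2 = 2√(1 + E(t)²) − 2, and the battery capacity satisfies C_b(t) = 2 ω_b √(1 − B(t) − B(t)²/4). -/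
open Complex Matrix Kronecker Polynomial

set_option maxHeartbeats 1000000 in
/-- Theorem 6: the Bell-nonlocality measure `B(t) = 2√(ι₁+ι₂) − 2`, with
`ι₁ ≥ ι₂` the two largest eigenvalues of `T Tᵀ`, satisfies
`B = 2√(1 + 4|α|²|β|²) − 2 = 2√(1 + E²) − 2`, and `C_b = 2ω_b √(1 − B − B²/4)`. -/
theorem stmt_9 (ωb ωc J1 J2 t : ℝ) (hωb : 0 < ωb) (hωc : 0 < ωc) (hJ1 : J1 ≠ 0)
    (Δ Ω e1 e2 ξ1 ξ2 p : ℝ) (α β : ℂ)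
    (hΔ : Δ = ωb - ωc) (hΩ : Ω = Real.sqrt (J1 ^ 2 + Δ ^ 2))
    (he1 : e1 = Ω - J2) (he2 : e2 = -Ω - J2)
    (hξ1 : ξ1 = (Δ + Ω) / J1) (hξ2 : ξ2 = (Δ - Ω) / J1)
    (hα : α = (Complex.exp (-Complex.I * ((e1 * t : ℝ) : ℂ)) * (ξ1 : ℂ) -
        Complex.exp (-Complex.I * ((e2 * t : ℝ) : ℂ)) * (ξ2 : ℂ)) / ((ξ1 : ℂ) - (ξ2 : ℂ)))
    (hβ : β = (Complex.exp (-Complex.I * ((e1 * t : ℝ) : ℂ)) -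
        Complex.exp (-Complex.I * ((e2 * t : ℝ) : ℂ))) / ((ξ1 : ℂ) - (ξ2 : ℂ)))
    (hp : p = ‖α‖ ^ 2)
    (E Cb : ℝ)
    (hE : E = 2 * ‖α‖ * ‖β‖)
    (hCb : Cb = 2 * ωb * |1 - 2 * p|)
    (ψ : Fin 2 × Fin 2 → ℂ)
    (hψ : ψ = fun x => if x = (0, 1) then α else if x = (1, 0) then β else 0)
    (ρ : Matrix (Fin 2 × Fin 2) (Fin 2 × Fin 2) ℂ)
    (hρ : ρ = Matrix.of fun i j => ψ i * star (ψ j))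
    (σ : Fin 3 → Matrix (Fin 2) (Fin 2) ℂ)
    (hσ : σ = ![!![0, 1; 1, 0], !![0, -Complex.I; Complex.I, 0], !![1, 0; 0, -1]])
    (T : Matrix (Fin 3) (Fin 3) ℝ)
    (hT : ∀ i j : Fin 3, (T i j : ℂ) = (ρ * (σ i ⊗ₖ σ j)).trace)
    (ι1 ι2 ι3 : ℝ) (hord : ι3 ≤ ι2 ∧ ι2 ≤ ι1)
    (hchar : (T * Tᵀ).charpoly = (X - C ι1) * (X - C ι2) * (X - C ι3))
    (B : ℝ) (hB : B = 2 * Real.sqrt (ι1 + ι2) - 2) :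
    B = 2 * Real.sqrt (1 + 4 * ‖α‖ ^ 2 * ‖β‖ ^ 2) - 2 ∧
    B = 2 * Real.sqrt (1 + E ^ 2) - 2 ∧
    Cb = 2 * ωb * Real.sqrt (1 - B - B ^ 2 / 4) := by
  -- real preliminaries
  have hJ2 : (0:ℝ) < J1 ^ 2 := by positivity
  have hΩ2 : Ω ^ 2 = J1 ^ 2 + Δ ^ 2 := by
    rw [hΩ]; exact Real.sq_sqrt (by positivity)
  have hΩpos : 0 < Ω := by rw [hΩ]; exact Real.sqrt_pos.mpr (by positivity)
  have hξprod : ξ1 * ξ2 = -1 := by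
    rw [hξ1, hξ2, div_mul_div_comm,
      show (Δ + Ω) * (Δ - Ω) = -(J1 * J1) by linear_combination -hΩ2,
      div_eq_iff (by positivity : J1 * J1 ≠ 0)]
    ring
  have hξne : ξ1 - ξ2 ≠ 0 := by
    rw [hξ1, hξ2]
    have h' : (Δ + Ω) / J1 - (Δ - Ω) / J1 = 2 * Ω / J1 := by field_simp; ring
    rw [h']
    exact div_ne_zero (by positivity) hJ1
  -- unit-modulus phases
  set u : ℂ := Complex.exp (-Complex.I * ((e1 * t : ℝ) : ℂ)) with hu_def
  set v : ℂ := Complex.exp (-Complex.I * ((e2 * t : ℝ) : ℂ)) with hv_def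
  have hu : Complex.normSq u = 1 := by
    rw [hu_def, Complex.normSq_eq_norm_sq, Complex.norm_exp]
    simp
  have hv : Complex.normSq v = 1 := by
    rw [hv_def, Complex.normSq_eq_norm_sq, Complex.norm_exp]
    simp
  set R : ℝ := (u * (starRingEnd ℂ) v).re with hR_def
  have hdenC : ((ξ1 : ℂ) - (ξ2 : ℂ)) = ((ξ1 - ξ2 : ℝ) : ℂ) := by push_cast; ring
  have hcross : (u * (ξ1 : ℂ) * (starRingEnd ℂ) (v * (ξ2 : ℂ))).re = ξ1 * ξ2 * R := by
    simp [Complex.mul_re, Complex.mul_im, hR_def]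
    ring
  have hnormα : ‖α‖ ^ 2 = (ξ1 ^ 2 + ξ2 ^ 2 - 2 * (ξ1 * ξ2) * R) / (ξ1 - ξ2) ^ 2 := by
    rw [hα, Complex.sq_norm, map_div₀, hdenC, Complex.normSq_ofReal,
      Complex.normSq_sub, Complex.normSq_mul, Complex.normSq_mul,
      Complex.normSq_ofReal, Complex.normSq_ofReal, hu, hv, hcross]
    ring
  have hnormβ : ‖β‖ ^ 2 = (2 - 2 * R) / (ξ1 - ξ2) ^ 2 := by
    rw [hβ, Complex.sq_norm, map_div₀, hdenC, Complex.normSq_ofReal,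
      Complex.normSq_sub, hu, hv, hR_def]
    ring
  have hub : ‖α‖ ^ 2 + ‖β‖ ^ 2 = 1 := by
    rw [hnormα, hnormβ, ← add_div, div_eq_one_iff_eq (pow_ne_zero 2 hξne)]
    linear_combination (2 - 2 * R) * hξprod
  -- the correlation matrix
  subst hψ hρ hσ
  have hwab : (α * (starRingEnd ℂ) β).re ^ 2 + (α * (starRingEnd ℂ) β).im ^ 2 =
      ‖α‖ ^ 2 * ‖β‖ ^ 2 := by
    have h1 : Complex.normSq (α * (starRingEnd ℂ) β) = Complex.normSq α * Complex.normSq β := by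
      rw [_root_.map_mul, Complex.normSq_conj]
    rw [Complex.sq_norm, Complex.sq_norm, ← h1, Complex.normSq_apply]
    ring
  have hub' : α.re ^ 2 + α.im ^ 2 + (β.re ^ 2 + β.im ^ 2) = 1 := by
    rw [Complex.sq_norm, Complex.sq_norm, Complex.normSq_apply, Complex.normSq_apply] at hub
    linarith [hub]
  have hTmat : T = !![2 * (α * (starRingEnd ℂ) β).re, 2 * (α * (starRingEnd ℂ) β).im, 0;
                      -(2 * (α * (starRingEnd ℂ) β).im), 2 * (α * (starRingEnd ℂ) β).re, 0;
                      0, 0, -1] := by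
    have h : ∀ i j : Fin 3, ∀ r : ℝ, T i j = r ↔ ((T i j : ℝ) : ℂ) = (r : ℂ) :=
      fun i j r => Complex.ofReal_inj.symm
    ext i j
    fin_cases i <;> fin_cases j
    all_goals (rw [h, hT]; simp [Matrix.trace, Matrix.diag, Matrix.mul_apply,
      Fintype.sum_prod_type, Fin.sum_univ_two, kroneckerMap_apply, Prod.ext_iff,
      Complex.ext_iff, Complex.mul_re, Complex.mul_im])
    all_goals try (constructor <;> (first | ring | linarith [hub']))
    all_goals try ring
    all_goals linarith [hub']
  -- the matrix T Tᵀ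
  set c : ℝ := 4 * ‖α‖ ^ 2 * ‖β‖ ^ 2 with hc_def
  have hc0 : 0 ≤ c := by positivity
  have hc1 : c ≤ 1 := by
    have h1 : c = 1 - (‖α‖ ^ 2 - ‖β‖ ^ 2) ^ 2 := by
      linear_combination hc_def + (1 + ‖α‖ ^ 2 + ‖β‖ ^ 2) * hub
    have h2 := sq_nonneg (‖α‖ ^ 2 - ‖β‖ ^ 2)
    linarith
  have hAB : (α.re ^ 2 + α.im ^ 2) * (β.re ^ 2 + β.im ^ 2) =
      ‖α‖ ^ 2 * ‖β‖ ^ 2 := by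
    rw [Complex.sq_norm, Complex.sq_norm, Complex.normSq_apply, Complex.normSq_apply]
    ring
  have hM : T * Tᵀ = !![c, 0, 0; 0, c, 0; 0, 0, 1] := by
    rw [hTmat]
    ext i j
    fin_cases i <;> fin_cases j <;>
      simp [Matrix.mul_apply, Fin.sum_univ_three, Matrix.transpose_apply,
        Complex.mul_re, Complex.mul_im, Matrix.vecHead, Matrix.vecTail]
    all_goals try (linear_combination 4 * hAB - hc_def)
    all_goals try ring
  -- the characteristic polynomial
  have hcp : (T * Tᵀ).charpoly = (X - C c) * (X - C c) * (X - C 1) := by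
    rw [hM, Matrix.charpoly, Matrix.det_fin_three]
    simp [charmatrix_apply_eq, charmatrix_apply_ne]
    try ring
  have hkey : (X - C ι1) * (X - C ι2) * (X - C ι3) = (X - C c) * (X - C c) * (X - C 1) :=
    hchar.symm.trans hcp
  have heval : ∀ x : ℝ, (x - ι1) * (x - ι2) * (x - ι3) = (x - c) * (x - c) * (x - 1) := by
    intro x
    have h := congrArg (Polynomial.eval x) hkey
    simpa using h
  have hroot : ∀ k : ℝ, (k = ι1 ∨ k = ι2 ∨ k = ι3) → k = c ∨ k = 1 := by
    intro k hk
    have h0 : (k - c) * (k - c) * (k - 1) = 0 := by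
      rw [← heval k]
      rcases hk with h | h | h <;> rw [h] <;> ring
    rcases mul_eq_zero.mp h0 with h | h
    · rcases mul_eq_zero.mp h with h | h <;> left <;> linarith
    · right; linarith
  have h2eval := heval 2
  have hι1 := hroot ι1 (Or.inl rfl)
  have hι2 := hroot ι2 (Or.inr (Or.inl rfl))
  have hι3 := hroot ι3 (Or.inr (Or.inr rfl))
  obtain ⟨h32, h21⟩ := hord
  have hι12 : ι1 + ι2 = 1 + c := by
    rcases hι1 with h1 | h1 <;> rcases hι2 with h2 | h2 <;> rcases hι3 with h3 | h3 <;>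
      rw [h1, h2, h3] at h2eval <;> rw [h1, h2]
    all_goals (
      first
        | linarith
        | (have h0 : (2 - c) * (1 - c) = 0 := by linear_combination -h2eval
           rcases mul_eq_zero.mp h0 with h | h <;> linarith)
        | (have h0 : (1 - c) * (3 - c) = 0 := by linear_combination -h2eval
           rcases mul_eq_zero.mp h0 with h | h <;> linarith)
        | (have h0 : (2 - c) ^ 2 * (1 - c) = 0 := by linear_combination h2eval
           rcases mul_eq_zero.mp h0 with h | h
           · have h2c : (2:ℝ) - c = 0 := pow_eq_zero_iff two_ne_zero |>.mp h
             linarith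
           · linarith))
  -- conclusions
  have hB' : B = 2 * Real.sqrt (1 + c) - 2 := by rw [hB, hι12]
  have hsq : Real.sqrt (1 + c) ^ 2 = 1 + c := Real.sq_sqrt (by linarith)
  have hBc : 1 - B - B ^ 2 / 4 = 1 - c := by
    rw [hB']; linear_combination -hsq
  have h1c : 1 - c = (1 - 2 * p) ^ 2 := by
    rw [hp, hc_def]; linear_combination (-4 * ‖α‖ ^ 2) * hub
  refine ⟨by rw [hB', hc_def], ?_, ?_⟩
  · rw [hB', hE]
    congr 2
    rw [hc_def]; ring
  · rw [hCb, hBc, h1c, Real.sqrt_sq_eq_abs]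
end

section
/- (Theorem 7) For every real time t, the l₁-norm coherence of the evolved state, C₁(t) := Σ_{i≠j} |ρ(t)_{ij}| where ρ(t) = |ψ(t)⟩⟨ψ(t)|, equals 2|α(t)||β(t)| (hence equals the concurrence E(t)), and the battery capacity satisfies C_b(t) = 2 ω_b √(1 − C₁(t)²). -/
open Complex Matrix

theorem stmt_10 (ωb ωc J1 J2 t : ℝ) (hωb : 0 < ωb) (hωc : 0 < ωc) (hJ1 : J1 ≠ 0)
    (Δ Ω e1 e2 ξ1 ξ2 p : ℝ) (α β : ℂ)
    (hΔ : Δ = ωb - ωc) (hΩ : Ω = Real.sqrt (J1 ^ 2 + Δ ^ 2))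
    (he1 : e1 = Ω - J2) (he2 : e2 = -Ω - J2)
    (hξ1 : ξ1 = (Δ + Ω) / J1) (hξ2 : ξ2 = (Δ - Ω) / J1)
    (hα : α = (Complex.exp (-Complex.I * ((e1 * t : ℝ) : ℂ)) * (ξ1 : ℂ) -
        Complex.exp (-Complex.I * ((e2 * t : ℝ) : ℂ)) * (ξ2 : ℂ)) / ((ξ1 : ℂ) - (ξ2 : ℂ)))
    (hβ : β = (Complex.exp (-Complex.I * ((e1 * t : ℝ) : ℂ)) -
        Complex.exp (-Complex.I * ((e2 * t : ℝ) : ℂ))) / ((ξ1 : ℂ) - (ξ2 : ℂ)))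
    (hp : p = ‖α‖ ^ 2)
    (ρ : Matrix (Fin 4) (Fin 4) ℂ)
    (hρ : ρ = Matrix.of fun i j => ![0, α, β, 0] i * star (![0, α, β, 0] j))
    (E Cb C1 : ℝ)
    (hE : E = 2 * ‖α‖ * ‖β‖)
    (hCb : Cb = 2 * ωb * |1 - 2 * p|)
    (hC1 : C1 = ∑ i : Fin 4, ∑ j : Fin 4, if i ≠ j then ‖ρ i j‖ else 0) :
    C1 = 2 * ‖α‖ * ‖β‖ ∧
    C1 = E ∧
    Cb = 2 * ωb * Real.sqrt (1 - C1 ^ 2) := by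
  -- basic facts
  have hΩpos : 0 < Ω := by
    rw [hΩ]
    apply Real.sqrt_pos.2
    positivity
  have hΩ2 : Ω ^ 2 = J1 ^ 2 + Δ ^ 2 := by
    rw [hΩ]; exact Real.sq_sqrt (by positivity)
  have hξξ : ξ1 * ξ2 = -1 := by
    rw [hξ1, hξ2]
    field_simp
    nlinarith [hΩ2]
  have hsub : ξ1 - ξ2 = 2 * Ω / J1 := by rw [hξ1, hξ2]; field_simp; ring
  have hsubne : ξ1 - ξ2 ≠ 0 := by
    rw [hsub]; exact div_ne_zero (by positivity) hJ1
  have hξneC : (ξ1 : ℂ) - (ξ2 : ℂ) ≠ 0 := by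
    rw [show ((ξ1 : ℂ) - (ξ2 : ℂ)) = ((ξ1 - ξ2 : ℝ) : ℂ) by push_cast; ring]
    exact_mod_cast hsubne
  -- unit modulus exponentials
  set c1 := Complex.exp (-Complex.I * ((e1 * t : ℝ) : ℂ)) with hc1
  set c2 := Complex.exp (-Complex.I * ((e2 * t : ℝ) : ℂ)) with hc2
  have hcd1 : c1 * (starRingEnd ℂ) c1 = 1 := by
    rw [hc1, ← Complex.exp_conj, ← Complex.exp_add]
    simp
  have hcd2 : c2 * (starRingEnd ℂ) c2 = 1 := by
    rw [hc2, ← Complex.exp_conj, ← Complex.exp_add]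
    simp
  have hξξC : (ξ1 : ℂ) * (ξ2 : ℂ) = -1 := by exact_mod_cast hξξ
  -- normalization
  have hnorm : ‖α‖ ^ 2 + ‖β‖ ^ 2 = 1 := by
    have key : α * (starRingEnd ℂ) α + β * (starRingEnd ℂ) β = 1 := by
      rw [hα, hβ]
      have h1 := hcd1
      have h2 := hcd2
      simp only [map_div₀, map_sub, map_mul, Complex.conj_ofReal]
      field_simp
      push_cast
      ring_nf
      linear_combination (ξ1 ^ 2 + 1 : ℂ) * h1 + ((ξ2 : ℂ) ^ 2 + 1) * h2 +
        (2 - c1 * (starRingEnd ℂ) c2 - c2 * (starRingEnd ℂ) c1) * hξξC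
    have h2 : ‖α‖ ^ 2 + ‖β‖ ^ 2 =
        (α * (starRingEnd ℂ) α + β * (starRingEnd ℂ) β).re := by
      simp [Complex.mul_conj, Complex.normSq_eq_norm_sq, ← Complex.ofReal_pow]
    rw [h2, key, Complex.one_re]
  -- C1 computation
  have hC1' : C1 = 2 * ‖α‖ * ‖β‖ := by
    rw [hC1]
    simp [hρ, Fin.sum_univ_four, _root_.map_mul]
    ring
  refine ⟨hC1', by rw [hC1', hE], ?_⟩
  rw [hCb, hC1']
  have : (1 : ℝ) - (2 * ‖α‖ * ‖β‖) ^ 2 = (1 - 2 * p) ^ 2 := by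
    rw [hp]; nlinarith [hnorm]
  rw [this, Real.sqrt_sq_eq_abs]
end

section
/- Assume J₁ > 0. For every real time t, the l₁-norm imaginarity of the evolved state, I(t) := Σ_{i≠j} |Im(ρ(t)_{ij})| = 2|Im(α(t) β(t)*)| where ρ(t) = |ψ(t)⟩⟨ψ(t)|, is given explicitly by I(t) = (√(J₁² + Δ²)/J₁) · |sin((e₁ − e₂)t)| / (1 + Δ²/J₁²), which equals (J₁/Ω)|sin(2Ωt)|. -/
open Complex Matrix

theorem stmt_11 (ωb ωc J1 J2 t : ℝ) (hωb : 0 < ωb) (hωc : 0 < ωc) (hJ1 : 0 < J1)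
    (Δ Ω e1 e2 ξ1 ξ2 p : ℝ) (α β : ℂ)
    (hΔ : Δ = ωb - ωc) (hΩ : Ω = Real.sqrt (J1 ^ 2 + Δ ^ 2))
    (he1 : e1 = Ω - J2) (he2 : e2 = -Ω - J2)
    (hξ1 : ξ1 = (Δ + Ω) / J1) (hξ2 : ξ2 = (Δ - Ω) / J1)
    (hα : α = (Complex.exp (-Complex.I * ((e1 * t : ℝ) : ℂ)) * (ξ1 : ℂ) -
        Complex.exp (-Complex.I * ((e2 * t : ℝ) : ℂ)) * (ξ2 : ℂ)) / ((ξ1 : ℂ) - (ξ2 : ℂ)))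
    (hβ : β = (Complex.exp (-Complex.I * ((e1 * t : ℝ) : ℂ)) -
        Complex.exp (-Complex.I * ((e2 * t : ℝ) : ℂ))) / ((ξ1 : ℂ) - (ξ2 : ℂ)))
    (hp : p = ‖α‖ ^ 2)
    (ρ : Matrix (Fin 4) (Fin 4) ℂ)
    (hρ : ρ = Matrix.of fun i j => ![0, α, β, 0] i * star (![0, α, β, 0] j))
    (I : ℝ)
    (hI : I = ∑ i : Fin 4, ∑ j : Fin 4, if i ≠ j then |(ρ i j).im| else 0) :
    I = 2 * |(α * star β).im| ∧
    I = (Real.sqrt (J1 ^ 2 + Δ ^ 2) / J1) * |Real.sin ((e1 - e2) * t)| / (1 + Δ ^ 2 / J1 ^ 2) ∧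
    I = (J1 / Ω) * |Real.sin (2 * Ω * t)| := by
  have hJ1' : J1 ≠ 0 := ne_of_gt hJ1
  have hΩpos : 0 < Ω := by
    rw [hΩ]; exact Real.sqrt_pos.mpr (by positivity)
  have hΩ' : Ω ≠ 0 := ne_of_gt hΩpos
  have hΩsq : Ω ^ 2 = J1 ^ 2 + Δ ^ 2 := by
    rw [hΩ]; exact Real.sq_sqrt (by positivity)
  have hd : ξ1 - ξ2 = 2 * Ω / J1 := by
    rw [hξ1, hξ2]; field_simp; ring
  have hdne : ξ1 - ξ2 ≠ 0 := by rw [hd]; positivity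
  -- Part 1
  have h1 : I = 2 * |(α * star β).im| := by
    have hba : β * star α = star (α * star β) := by
      rw [StarMul.star_mul, star_star]
    rw [hI]
    simp only [hρ, Fin.sum_univ_four, Matrix.of_apply]
    norm_num [Matrix.cons_val_zero, Matrix.cons_val_one, Matrix.cons_val_two, Matrix.vecHead, Matrix.vecTail,
      Matrix.cons_val_three, hba, Fin.ext_iff,
      Complex.mul_im]
    rw [show -(α.re * β.im) + α.im * β.re = -(α.re * β.im - α.im * β.re) by ring,
      abs_neg]
    ring
  -- key imaginary part computation
  have hsub : e1 * t - e2 * t = 2 * Ω * t := by rw [he1, he2]; ring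
  have key : (α * star β).im = J1 * Real.sin (2 * Ω * t) / (2 * Ω) := by
    subst hξ1; subst hξ2
    have hJC : (J1 : ℂ) ≠ 0 := by exact_mod_cast hJ1'
    have hOC : (Ω : ℂ) ≠ 0 := by exact_mod_cast hΩ'
    have hr : ∀ r : ℝ, Complex.exp (-Complex.I * (r : ℂ)) =
        ((Real.cos r : ℝ) : ℂ) - ((Real.sin r : ℝ) : ℂ) * Complex.I := by
      intro r
      have h : -Complex.I * (r : ℂ) = ((-r : ℝ) : ℂ) * Complex.I := by push_cast; ring
      rw [h, Complex.exp_mul_I, ← Complex.ofReal_cos, ← Complex.ofReal_sin,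
        Real.cos_neg, Real.sin_neg]
      push_cast; ring
    have hsin : Real.sin (2 * Ω * t) = Real.sin (e1 * t) * Real.cos (e2 * t)
        - Real.cos (e1 * t) * Real.sin (e2 * t) := by
      rw [← hsub, Real.sin_sub]
    have hαv : α = (((Real.cos (e1*t)*(Δ+Ω) - Real.cos (e2*t)*(Δ-Ω))/(2*Ω) : ℝ) : ℂ) +
        (((-(Real.sin (e1*t))*(Δ+Ω) + Real.sin (e2*t)*(Δ-Ω))/(2*Ω) : ℝ) : ℂ) * Complex.I := by
      rw [hα, hr, hr]; push_cast; field_simp; ring_nf; field_simp [hOC]; ring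
    have hβv : β = ((((Real.cos (e1*t) - Real.cos (e2*t))*J1/(2*Ω)) : ℝ) : ℂ) +
        (((-(Real.sin (e1*t) - Real.sin (e2*t))*J1/(2*Ω)) : ℝ) : ℂ) * Complex.I := by
      rw [hβ, hr, hr]; push_cast; field_simp; ring_nf; field_simp [hOC]
    rw [hαv, hβv, hsin]
    simp only [star_add, star_mul', Complex.star_def, Complex.conj_ofReal,
      Complex.conj_I, mul_neg, Complex.add_im, Complex.mul_im, Complex.mul_re,
      Complex.add_re, Complex.neg_im, Complex.neg_re, Complex.ofReal_im,
      Complex.ofReal_re, Complex.I_im, Complex.I_re]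
    field_simp
    ring
  rw [key] at h1
  have habs : |J1 * Real.sin (2 * Ω * t) / (2 * Ω)| =
      J1 * |Real.sin (2 * Ω * t)| / (2 * Ω) := by
    rw [abs_div, abs_mul, abs_of_pos hJ1, abs_of_pos (by positivity : (0:ℝ) < 2 * Ω)]
  have h3 : I = (J1 / Ω) * |Real.sin (2 * Ω * t)| := by
    rw [h1, habs]; field_simp
  refine ⟨by rw [key]; exact h1, ?_, h3⟩
  have hsq : Real.sqrt (J1 ^ 2 + Δ ^ 2) = Ω := hΩ.symm
  have hte : (e1 - e2) * t = 2 * Ω * t := by rw [he1, he2]; ring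
  have h4 : 1 + Δ ^ 2 / J1 ^ 2 = Ω ^ 2 / J1 ^ 2 := by
    field_simp; linarith [hΩsq]
  rw [hsq, h3, hte, h4]
  field_simp
end

section
/- For every real time t, the real part of α(t) β(t)* is given explicitly by Re(α(t) β(t)*) = (Δ/J₁)(1 − cos((e₁ − e₂)t)) / (2(J₁² + Δ²)/J₁²) = Δ J₁ (1 − cos(2Ωt)) / (2(J₁² + Δ²)). -/
open Complex Matrix

theorem stmt_12 (ωb ωc J1 J2 t : ℝ) (hωb : 0 < ωb) (hωc : 0 < ωc) (hJ1 : J1 ≠ 0)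
    (Δ Ω e1 e2 ξ1 ξ2 p : ℝ) (α β : ℂ)
    (hΔ : Δ = ωb - ωc) (hΩ : Ω = Real.sqrt (J1 ^ 2 + Δ ^ 2))
    (he1 : e1 = Ω - J2) (he2 : e2 = -Ω - J2)
    (hξ1 : ξ1 = (Δ + Ω) / J1) (hξ2 : ξ2 = (Δ - Ω) / J1)
    (hα : α = (Complex.exp (-Complex.I * ((e1 * t : ℝ) : ℂ)) * (ξ1 : ℂ) -
        Complex.exp (-Complex.I * ((e2 * t : ℝ) : ℂ)) * (ξ2 : ℂ)) / ((ξ1 : ℂ) - (ξ2 : ℂ)))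
    (hβ : β = (Complex.exp (-Complex.I * ((e1 * t : ℝ) : ℂ)) -
        Complex.exp (-Complex.I * ((e2 * t : ℝ) : ℂ))) / ((ξ1 : ℂ) - (ξ2 : ℂ)))
    (hp : p = ‖α‖ ^ 2) :
    (α * star β).re = (Δ / J1) * (1 - Real.cos ((e1 - e2) * t)) / (2 * (J1 ^ 2 + Δ ^ 2) / J1 ^ 2) ∧
    (α * star β).re = Δ * J1 * (1 - Real.cos (2 * Ω * t)) / (2 * (J1 ^ 2 + Δ ^ 2)) := by
  have hexp : ∀ x : ℝ, Complex.exp (-Complex.I * (x : ℂ)) =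
      ((Real.cos x : ℝ) : ℂ) - ((Real.sin x : ℝ) : ℂ) * Complex.I := by
    intro x
    rw [show -Complex.I * (x : ℂ) = ((-x : ℝ) : ℂ) * Complex.I by push_cast; ring,
      Complex.exp_mul_I]
    push_cast
    simp [Real.cos_neg, Real.sin_neg]
    ring
  have hΩsq : Ω ^ 2 = J1 ^ 2 + Δ ^ 2 := by
    rw [hΩ, Real.sq_sqrt]; positivity
  have hΩpos : 0 < Ω := by
    rw [hΩ]
    apply Real.sqrt_pos.mpr
    have := pow_pos (abs_pos.mpr hJ1) 2
    nlinarith [sq_nonneg Δ, _root_.sq_abs J1]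
  set a := e1 * t with ha
  set b := e2 * t with hb
  have hd : ξ1 - ξ2 = 2 * Ω / J1 := by rw [hξ1, hξ2]; field_simp; ring
  have hdne : ξ1 - ξ2 ≠ 0 := by
    rw [hd]; positivity
  -- rewrite α, β in cartesian form
  have hα' : α = (((Real.cos a * ξ1 - Real.cos b * ξ2 : ℝ) : ℂ) +
      ((-(Real.sin a * ξ1 - Real.sin b * ξ2) : ℝ) : ℂ) * Complex.I) / (((ξ1 - ξ2 : ℝ)) : ℂ) := by
    rw [hα, hexp, hexp]; push_cast; ring
  have hβ' : β = (((Real.cos a - Real.cos b : ℝ) : ℂ) +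
      ((-(Real.sin a - Real.sin b) : ℝ) : ℂ) * Complex.I) / (((ξ1 - ξ2 : ℝ)) : ℂ) := by
    rw [hβ, hexp, hexp]; push_cast; ring
  have hre : (α * star β).re =
      ((Real.cos a * ξ1 - Real.cos b * ξ2) * (Real.cos a - Real.cos b) +
        (Real.sin a * ξ1 - Real.sin b * ξ2) * (Real.sin a - Real.sin b)) / (ξ1 - ξ2) ^ 2 := by
    have comb : ∀ (z w : ℂ) (r : ℝ), (z / (r : ℂ)) * star (w / (r : ℂ)) =
        (z * star w) / ((r ^ 2 : ℝ) : ℂ) := by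
      intro z w r
      simp only [star_div₀, Complex.star_def, Complex.conj_ofReal]
      push_cast
      ring
    rw [hα', hβ', comb, Complex.div_ofReal_re]
    congr 1
    simp only [Complex.star_def, Complex.mul_re, Complex.add_re, Complex.add_im,
      Complex.mul_im, Complex.conj_re, Complex.conj_im, Complex.I_re, Complex.I_im,
      Complex.ofReal_re, Complex.ofReal_im]
    ring
  have hcos : Real.cos ((e1 - e2) * t) = Real.cos a * Real.cos b + Real.sin a * Real.sin b := by
    rw [show (e1 - e2) * t = a - b by rw [ha, hb]; ring, Real.cos_sub]
  have key : (α * star β).re = (ξ1 + ξ2) * (1 - Real.cos ((e1 - e2) * t)) / (ξ1 - ξ2) ^ 2 := by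
    rw [hre, hcos]
    congr 1
    linear_combination ξ1 * Real.sin_sq_add_cos_sq a + ξ2 * Real.sin_sq_add_cos_sq b
  have hsum : ξ1 + ξ2 = 2 * Δ / J1 := by rw [hξ1, hξ2]; field_simp; ring
  have hΩne : Ω ≠ 0 := ne_of_gt hΩpos
  have hJΔ : J1 ^ 2 + Δ ^ 2 ≠ 0 := by rw [← hΩsq]; positivity
  have goal1 : (α * star β).re =
      (Δ / J1) * (1 - Real.cos ((e1 - e2) * t)) / (2 * (J1 ^ 2 + Δ ^ 2) / J1 ^ 2) := by
    rw [key, hsum, hd, ← hΩsq]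
    field_simp
  refine ⟨goal1, ?_⟩
  rw [goal1, show (e1 - e2) * t = 2 * Ω * t by rw [he1, he2]; ring, ← hΩsq]
  field_simp
end

section
/- (Theorem 8) For every real time t, the l₁-norm coherence C₁(t) = 2|α(t)||β(t)| and the l₁-norm imaginarity I(t) = 2|Im(α(t)β(t)*)| satisfy C₁(t)² = 4 Re(α(t)β(t)*)² + I(t)², and the battery capacity satisfies the trade-off C_b(t) = 2 ω_b √(1 − 4 Re(α(t)β(t)*)² − I(t)²). -/
open Complex Matrix

theorem stmt_13 (ωb ωc J1 J2 t : ℝ) (hωb : 0 < ωb) (hωc : 0 < ωc) (hJ1 : J1 ≠ 0)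
    (Δ Ω e1 e2 ξ1 ξ2 p : ℝ) (α β : ℂ)
    (hΔ : Δ = ωb - ωc) (hΩ : Ω = Real.sqrt (J1 ^ 2 + Δ ^ 2))
    (he1 : e1 = Ω - J2) (he2 : e2 = -Ω - J2)
    (hξ1 : ξ1 = (Δ + Ω) / J1) (hξ2 : ξ2 = (Δ - Ω) / J1)
    (hα : α = (Complex.exp (-Complex.I * ((e1 * t : ℝ) : ℂ)) * (ξ1 : ℂ) -
        Complex.exp (-Complex.I * ((e2 * t : ℝ) : ℂ)) * (ξ2 : ℂ)) / ((ξ1 : ℂ) - (ξ2 : ℂ)))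
    (hβ : β = (Complex.exp (-Complex.I * ((e1 * t : ℝ) : ℂ)) -
        Complex.exp (-Complex.I * ((e2 * t : ℝ) : ℂ))) / ((ξ1 : ℂ) - (ξ2 : ℂ)))
    (hp : p = ‖α‖ ^ 2)
    (Cb C1 I : ℝ)
    (hCb : Cb = 2 * ωb * |1 - 2 * p|)
    (hC1 : C1 = 2 * ‖α‖ * ‖β‖)
    (hI : I = 2 * |(α * star β).im|) :
    C1 ^ 2 = 4 * (α * star β).re ^ 2 + I ^ 2 ∧
    Cb = 2 * ωb * Real.sqrt (1 - 4 * (α * star β).re ^ 2 - I ^ 2) := by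
  have hΩ2 : Ω ^ 2 = J1 ^ 2 + Δ ^ 2 := by
    rw [hΩ]; exact Real.sq_sqrt (by positivity)
  have hΩpos : 0 < Ω := by
    rw [hΩ]; exact Real.sqrt_pos.mpr (by positivity)
  have hprod : ξ1 * ξ2 = -1 := by
    rw [hξ1, hξ2]; field_simp; nlinarith
  have hdne : ξ1 - ξ2 ≠ 0 := by
    rw [hξ1, hξ2]
    have : (Δ + Ω) / J1 - (Δ - Ω) / J1 = 2 * Ω / J1 := by field_simp; ring
    rw [this]
    exact div_ne_zero (by positivity) hJ1
  set a : ℂ := Complex.exp (-Complex.I * ((e1 * t : ℝ) : ℂ)) with ha_def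
  set b : ℂ := Complex.exp (-Complex.I * ((e2 * t : ℝ) : ℂ)) with hb_def
  have hone : ∀ x : ℝ, (Complex.exp (-Complex.I * (x : ℂ))).re ^ 2 +
      (Complex.exp (-Complex.I * (x : ℂ))).im ^ 2 = 1 := by
    intro x
    have h := Complex.sq_norm (Complex.exp (-Complex.I * (x : ℂ)))
    rw [Complex.normSq_apply] at h
    have habs : ‖Complex.exp (-Complex.I * (x : ℂ))‖ = 1 := by
      rw [Complex.norm_exp]
      simp [Complex.mul_re]
    rw [habs] at h
    nlinarith [h]
  have ha : a.re ^ 2 + a.im ^ 2 = 1 := hone _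
  have hb : b.re ^ 2 + b.im ^ 2 = 1 := hone _
  have hdc : ((ξ1 : ℂ) - (ξ2 : ℂ)) = ((ξ1 - ξ2 : ℝ) : ℂ) := by push_cast; ring
  -- normalization
  have hnorm : Complex.normSq α + Complex.normSq β = 1 := by
    rw [hα, hβ, hdc, map_div₀, map_div₀, Complex.normSq_ofReal]
    rw [← add_div, div_eq_one_iff_eq (by positivity : (ξ1 - ξ2) * (ξ1 - ξ2) ≠ 0)]
    simp only [Complex.normSq_apply, Complex.sub_re, Complex.sub_im, Complex.mul_re,
      Complex.mul_im, Complex.ofReal_re, Complex.ofReal_im]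
    linear_combination (ξ1 ^ 2 + 1) * ha + (ξ2 ^ 2 + 1) * hb +
      (2 - 2 * (a.re * b.re + a.im * b.im)) * hprod
  have hnsq : Complex.normSq (α * star β) = Complex.normSq α * Complex.normSq β := by
    rw [_root_.map_mul]
    simp [Complex.normSq_conj]
  have hkey : (α * star β).re ^ 2 + (α * star β).im ^ 2 = Complex.normSq α * Complex.normSq β := by
    rw [← hnsq, Complex.normSq_apply]; ring
  have hI2 : I ^ 2 = 4 * (α * star β).im ^ 2 := by
    rw [hI]; rw [mul_pow, _root_.sq_abs]; ring
  have hC1sq : C1 ^ 2 = 4 * (Complex.normSq α * Complex.normSq β) := by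
    rw [hC1, show (2 * ‖α‖ * ‖β‖) ^ 2 =
      4 * (‖α‖ ^ 2 * ‖β‖ ^ 2) from by ring,
      Complex.sq_norm, Complex.sq_norm]
  constructor
  · rw [hC1sq, hI2, ← hkey]; ring
  · have harg : 1 - 4 * (α * star β).re ^ 2 - I ^ 2 =
        (Complex.normSq α - Complex.normSq β) ^ 2 := by
      rw [hI2]
      linear_combination (-4 : ℝ) * hkey - (1 + Complex.normSq α + Complex.normSq β) * hnorm
    rw [harg, Real.sqrt_sq_eq_abs, hCb, hp, Complex.sq_norm]
    congr 1
    rw [abs_sub_comm]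
    congr 1
    linarith [hnorm]
end

section
/- (Theorem 9) For every real time t, the trace-distance quantum state texture of the battery state, T_tr(t) := ½ Tr|ρ_b(t) − f₁| where f₁ = ½[[1,1],[1,1]] and Tr|A| = Tr((A A†)^{1/2}), equals ½√((1 − 2p(t))² + 1), and consequently the battery capacity satisfies C_b(t) = 2 ω_b √(4 T_tr(t)² − 1). -/
open Complex Matrix

/-- The positive semidefinite square root of a positive semidefinite matrix (removed from
Mathlib; restored here with its former definition). -/
noncomputable def Matrix.PosSemidef.sqrt {n 𝕜 : Type*} [Fintype n] [RCLike 𝕜] [PartialOrder 𝕜]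
    [DecidableEq n]
    {A : Matrix n n 𝕜} (hA : A.PosSemidef) : Matrix n n 𝕜 :=
  hA.1.eigenvectorUnitary.1 * diagonal ((↑) ∘ (√·) ∘ hA.1.eigenvalues) *
    (star hA.1.eigenvectorUnitary : Matrix n n 𝕜)

/-- Theorem 9: the trace-distance texture
`T_tr = ½Tr|ρ_b − f₁|` equals `½√((1−2p)²+1)`, hence `C_b = 2ω_b√(4T_tr²−1)`. -/
theorem stmt_14 (ωb ωc J1 J2 t : ℝ) (hωb : 0 < ωb) (hωc : 0 < ωc) (hJ1 : J1 ≠ 0)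
    (Δ Ω e1 e2 ξ1 ξ2 p : ℝ) (α β : ℂ)
    (hΔ : Δ = ωb - ωc) (hΩ : Ω = Real.sqrt (J1 ^ 2 + Δ ^ 2))
    (he1 : e1 = Ω - J2) (he2 : e2 = -Ω - J2)
    (hξ1 : ξ1 = (Δ + Ω) / J1) (hξ2 : ξ2 = (Δ - Ω) / J1)
    (hα : α = (Complex.exp (-Complex.I * ((e1 * t : ℝ) : ℂ)) * (ξ1 : ℂ) -
        Complex.exp (-Complex.I * ((e2 * t : ℝ) : ℂ)) * (ξ2 : ℂ)) / ((ξ1 : ℂ) - (ξ2 : ℂ)))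
    (hβ : β = (Complex.exp (-Complex.I * ((e1 * t : ℝ) : ℂ)) -
        Complex.exp (-Complex.I * ((e2 * t : ℝ) : ℂ))) / ((ξ1 : ℂ) - (ξ2 : ℂ)))
    (hp : p = ‖α‖ ^ 2)
    (Cb : ℝ) (hCb : Cb = 2 * ωb * |1 - 2 * p|)
    (ρb f1 : Matrix (Fin 2) (Fin 2) ℝ)
    (hρb : ρb = !![p, 0; 0, 1 - p])
    (hf1 : f1 = (1 / 2 : ℝ) • !![1, 1; 1, 1])
    (hA : ((ρb - f1) * (ρb - f1)ᵀ).PosSemidef)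
    (Ttr : ℝ) (hTtr : Ttr = (1 / 2) * hA.sqrt.trace) :
    Ttr = (1 / 2) * Real.sqrt ((1 - 2 * p) ^ 2 + 1) ∧
    Cb = 2 * ωb * Real.sqrt (4 * Ttr ^ 2 - 1) := by
  set c : ℝ := Real.sqrt ((1 - 2 * p) ^ 2 + 1) / 2 with hc
  have hcnn : 0 ≤ c := by positivity
  have hsq : ((1 - 2 * p) ^ 2 + 1) ≥ 0 := by positivity
  set B : Matrix (Fin 2) (Fin 2) ℝ := Matrix.diagonal (fun _ => c) with hB
  have hBpsd : B.PosSemidef := Matrix.posSemidef_diagonal_iff.mpr fun _ => hcnn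
  have hBsq : B ^ 2 = (ρb - f1) * (ρb - f1)ᵀ := by
    have hc2 : c * c = ((1 - 2 * p) ^ 2 + 1) / 4 := by
      rw [hc, div_mul_div_comm, Real.mul_self_sqrt hsq]; norm_num
    subst hρb hf1
    rw [hB, pow_two, Matrix.diagonal_mul_diagonal]
    ext i j
    fin_cases i <;> fin_cases j <;>
      simp [Matrix.mul_apply, Fin.sum_univ_two, Matrix.diagonal, hc2, Matrix.vecHead, Matrix.vecTail] <;> ring
  have hsqrt : hA.sqrt = B := by
    have hAeq : (ρb - f1) * (ρb - f1)ᵀ = (c * c) • (1 : Matrix (Fin 2) (Fin 2) ℝ) := by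
      rw [← hBsq, hB, pow_two, Matrix.diagonal_mul_diagonal, Matrix.smul_one_eq_diagonal]
    have h2 : (star hA.1.eigenvectorUnitary : Matrix (Fin 2) (Fin 2) ℝ) * ((ρb - f1) * (ρb - f1)ᵀ)
        * (hA.1.eigenvectorUnitary : Matrix (Fin 2) (Fin 2) ℝ) = (c * c) • (1 : Matrix (Fin 2) (Fin 2) ℝ) := by
      refine (congrArg (fun M : Matrix (Fin 2) (Fin 2) ℝ =>
        (star hA.1.eigenvectorUnitary : Matrix (Fin 2) (Fin 2) ℝ) * M *
          (hA.1.eigenvectorUnitary : Matrix (Fin 2) (Fin 2) ℝ)) hAeq).trans ?_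
      rw [Matrix.mul_smul, mul_one, Matrix.smul_mul, Unitary.coe_star_mul_self]
    have h3 := hA.1.conjStarAlgAut_star_eigenvectorUnitary
    rw [Unitary.conjStarAlgAut_star_apply, h2, Matrix.smul_one_eq_diagonal] at h3
    have heig : ∀ i, hA.1.eigenvalues i = c * c := by
      intro i
      have := congr_fun (congr_fun h3 i) i
      simpa using this.symm
    unfold Matrix.PosSemidef.sqrt
    have h4 : (diagonal (RCLike.ofReal ∘ (fun x => √x) ∘ hA.1.eigenvalues) : Matrix (Fin 2) (Fin 2) ℝ) = c • 1 := by
      rw [Matrix.smul_one_eq_diagonal]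
      congr 1
      funext i
      simp only [Function.comp_apply, heig i, RCLike.ofReal_real_eq_id, id, Real.sqrt_mul_self hcnn]
    rw [h4, Matrix.mul_smul, mul_one, Matrix.smul_mul, Unitary.mul_star_self_of_mem hA.1.eigenvectorUnitary.2, hB,
      Matrix.smul_one_eq_diagonal]
  have htr : hA.sqrt.trace = Real.sqrt ((1 - 2 * p) ^ 2 + 1) := by
    rw [hsqrt, hB, Matrix.trace_diagonal]
    simp [hc]; ring
  have h1 : Ttr = (1 / 2) * Real.sqrt ((1 - 2 * p) ^ 2 + 1) := by rw [hTtr, htr]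
  refine ⟨h1, ?_⟩
  have h2 : 4 * Ttr ^ 2 - 1 = (1 - 2 * p) ^ 2 := by
    rw [h1, mul_pow, Real.sq_sqrt hsq]; ring
  rw [hCb, h2, Real.sqrt_sq_eq_abs]
end

section
/- (Theorem 10) For every real time t, the quantum state texture of the battery state and the residual battery capacity satisfy 4 T_tr(t)² = 1 + (ε₄ − ε₁ − R(t))² / (4(ω_b + ω_c)²), where R(t) := (ε₄ − ε₁) − 2(ω_b + ω_c)|1 − 2p(t)| is the residual battery capacity; in particular R(t) is negatively correlated with T_tr(t). -/
open Complex Matrix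
lemma sqrt_scalar_aux {A : Matrix (Fin 2) (Fin 2) ℝ} (hA : A.PosSemidef) (c : ℝ)
    (h : A = diagonal (fun _ => c)) : hA.sqrt = diagonal (fun _ => Real.sqrt c) := by
  subst h
  have key : ∀ V : unitary (Matrix (Fin 2) (Fin 2) ℝ),
      Unitary.conjStarAlgAut ℝ _ V (diagonal fun _ => c) = c • 1 := by
    intro V
    rw [show diagonal (fun _ => c) = c • (1 : Matrix (Fin 2) (Fin 2) ℝ) by
      ext i j; simp [diagonal, one_apply]]
    simp
  have hev : ∀ i, hA.1.eigenvalues i = c := by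
    intro i
    have h := (key _).symm.trans hA.1.conjStarAlgAut_star_eigenvectorUnitary
    have h2 := congrFun (congrFun h i) i
    simpa using h2.symm
  unfold Matrix.PosSemidef.sqrt
  have hd : diagonal (RCLike.ofReal ∘ (√·) ∘ hA.1.eigenvalues) = Real.sqrt c • (1 : Matrix (Fin 2) (Fin 2) ℝ) := by
    ext i j
    simp only [diagonal, one_apply, of_apply, Function.comp_apply, RCLike.ofReal_real_eq_id, id,
      Matrix.smul_apply, smul_eq_mul, mul_ite, mul_one, mul_zero]
    split_ifs
    · exact congrArg Real.sqrt (hev i)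
    · rfl
  rw [hd, mul_smul_comm, mul_one, smul_mul_assoc, Unitary.mul_star_self_of_mem (SetLike.coe_mem _)]
  ext i j; simp [diagonal, one_apply]


theorem stmt_15 (ωb ωc J1 J2 t : ℝ) (hωb : 0 < ωb) (hωc : 0 < ωc) (hJ1 : J1 ≠ 0)
    (Δ Ω e1 e2 ξ1 ξ2 p : ℝ) (α β : ℂ)
    (hΔ : Δ = ωb - ωc) (hΩ : Ω = Real.sqrt (J1 ^ 2 + Δ ^ 2))
    (he1 : e1 = Ω - J2) (he2 : e2 = -Ω - J2)
    (hξ1 : ξ1 = (Δ + Ω) / J1) (hξ2 : ξ2 = (Δ - Ω) / J1)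
    (hα : α = (Complex.exp (-Complex.I * ((e1 * t : ℝ) : ℂ)) * (ξ1 : ℂ) -
        Complex.exp (-Complex.I * ((e2 * t : ℝ) : ℂ)) * (ξ2 : ℂ)) / ((ξ1 : ℂ) - (ξ2 : ℂ)))
    (hβ : β = (Complex.exp (-Complex.I * ((e1 * t : ℝ) : ℂ)) -
        Complex.exp (-Complex.I * ((e2 * t : ℝ) : ℂ))) / ((ξ1 : ℂ) - (ξ2 : ℂ)))
    (hp : p = ‖α‖ ^ 2)
    (ρb f1 : Matrix (Fin 2) (Fin 2) ℝ)
    (hρb : ρb = !![p, 0; 0, 1 - p])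
    (hf1 : f1 = (1 / 2 : ℝ) • !![1, 1; 1, 1])
    (hA : ((ρb - f1) * (ρb - f1)ᵀ).PosSemidef)
    (Ttr : ℝ) (hTtr : Ttr = (1 / 2) * hA.sqrt.trace)
    (ε1 ε4 R : ℝ)
    (hε1 : ε1 = min (min (Ω - J2) (-Ω - J2)) (min (J2 + (ωb + ωc)) (J2 - (ωb + ωc))))
    (hε4 : ε4 = max (max (Ω - J2) (-Ω - J2)) (max (J2 + (ωb + ωc)) (J2 - (ωb + ωc))))
    (hR : R = (ε4 - ε1) - 2 * (ωb + ωc) * |1 - 2 * p|) :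
    4 * Ttr ^ 2 = 1 + (ε4 - ε1 - R) ^ 2 / (4 * (ωb + ωc) ^ 2) := by
  obtain ⟨c, hc⟩ : ∃ c : ℝ, c = (p - 1/2)^2 + 1/4 := ⟨_, rfl⟩
  have hc0 : 0 ≤ c := by rw [hc]; positivity
  set S : Matrix (Fin 2) (Fin 2) ℝ := Matrix.diagonal (fun _ => Real.sqrt c) with hS
  have hSpsd : S.PosSemidef := Matrix.PosSemidef.diagonal (fun _ => Real.sqrt_nonneg c)
  have hcc : Real.sqrt c * Real.sqrt c = c := Real.mul_self_sqrt hc0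
  have hM : ρb - f1 = !![p - 1/2, -(1/2); -(1/2), 1/2 - p] := by
    rw [hρb, hf1]
    ext i j
    fin_cases i <;> fin_cases j <;>
      simp [Matrix.sub_apply, Matrix.smul_apply] <;> ring
  have hSmat : S = !![Real.sqrt c, 0; 0, Real.sqrt c] := by
    ext i j
    fin_cases i <;> fin_cases j <;> simp [hS, Matrix.diagonal]
  have hMT : (!![p - 1/2, -(1/2); -(1/2), 1/2 - p] : Matrix (Fin 2) (Fin 2) ℝ)ᵀ
      = !![p - 1/2, -(1/2); -(1/2), 1/2 - p] := by
    ext i j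
    fin_cases i <;> fin_cases j <;> simp
  have hsq : S ^ 2 = (ρb - f1) * (ρb - f1)ᵀ := by
    rw [pow_two, hSmat, hM, hMT, Matrix.mul_fin_two, Matrix.mul_fin_two]
    ext i j
    fin_cases i <;> fin_cases j <;> simp <;> first
      | linear_combination hcc + hc
      | linear_combination -hcc + hc
      | linear_combination hcc
      | ring
  have hsqrt : S = hA.sqrt := by
    rw [sqrt_scalar_aux hA c (by rw [← hsq, pow_two, hS, diagonal_mul_diagonal, hcc])]
  have hTtr' : Ttr = Real.sqrt c := by
    rw [hTtr, ← hsqrt, hSmat]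
    simp [Matrix.trace, Matrix.diag, Fin.sum_univ_two]
    ring
  have hsum : (0:ℝ) < ωb + ωc := by linarith
  have hRs : ε4 - ε1 - R = 2 * (ωb + ωc) * |1 - 2 * p| := by rw [hR]; ring
  rw [hTtr', hRs, Real.sq_sqrt hc0]
  rw [mul_pow, mul_pow, _root_.sq_abs]
  rw [hc]
  field_simp
  ring
end

section
/- (Theorem 2, X-state form) Let ω_b ≥ ω_c > 0, J₁ ≠ 0, J₂ ∈ ℝ, and let ρ be a 4×4 complex Hermitian positive-semidefinite matrix of trace 1 in X-form in the ordered basis (|00⟩, |01⟩, |10⟩, |11⟩), i.e. ρ₁₂ = ρ₁₃ = ρ₂₄ = ρ₃₄ = 0 (and their conjugate entries vanish). Let λ₁ ≤ λ₂ ≤ λ₃ ≤ λ₄ be the eigenvalues of ρ and ε₁ ≤ ε₂ ≤ ε₃ ≤ ε₄ the eigenvalues of the full Hamiltonian H, both in ascending order. Then the total capacity dominates the sum of the subsystem capacities: (λ₄ − λ₁)(ε₄ − ε₁) + (λ₃ − λ₂)(ε₃ − ε₂) ≥ 2 ω_b |ρ₁₁ + ρ₂₂ − ρ₃₃ − ρ₄₄|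 + 2 ω_c |ρ₁₁ + ρ₃₃ − ρ₂₂ − ρ₄₄|. -/
open Matrix
open scoped ComplexOrder

private lemma sum4_bound (e c : Fin 4 → ℝ) (μ S : ℝ)
    (hc : ∀ k, |c k| ≤ 1) (h0 : ∑ k, c k = 0)
    (hS : ∑ k, |e k - μ| ≤ S) : ∑ k, c k * e k ≤ S := by
  have h1 : ∑ k, c k * e k = ∑ k, c k * (e k - μ) := by
    simp only [Fin.sum_univ_four] at h0 ⊢
    linear_combination μ * h0
  rw [h1]
  calc ∑ k, c k * (e k - μ) ≤ ∑ k, |e k - μ| := by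
        refine Finset.sum_le_sum fun k _ => ?_
        calc c k * (e k - μ) ≤ |c k * (e k - μ)| := le_abs_self _
          _ = |c k| * |e k - μ| := abs_mul _ _
          _ ≤ 1 * |e k - μ| := mul_le_mul_of_nonneg_right (hc k) (abs_nonneg _)
          _ = |e k - μ| := one_mul _
    _ ≤ S := hS

private lemma sum4_bound2 (e c b : Fin 4 → ℝ) (μ R : ℝ) (hR : 0 ≤ R)
    (hc : ∀ k, |c k| ≤ b k) (he : ∀ k, |e k - μ| ≤ R)
    (h0 : ∑ k, c k = 0) (hb : ∑ k, b k = 2) :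
    ∑ k, c k * e k ≤ 2 * R := by
  have h1 : ∑ k, c k * e k = ∑ k, c k * (e k - μ) := by
    simp only [Fin.sum_univ_four] at h0 ⊢
    linear_combination μ * h0
  rw [h1]
  calc ∑ k, c k * (e k - μ) ≤ ∑ k, b k * R := by
        refine Finset.sum_le_sum fun k _ => ?_
        calc c k * (e k - μ) ≤ |c k * (e k - μ)| := le_abs_self _
          _ = |c k| * |e k - μ| := abs_mul _ _
          _ ≤ b k * R := mul_le_mul (hc k) (he k) (abs_nonneg _)
              ((abs_nonneg (c k)).trans (hc k))
    _ = 2 * R := by rw [← Finset.sum_mul, hb]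

private lemma key_ineq (G1 G2 E1 E2 W D O u v : ℝ)
    (hG2 : 0 ≤ G2)
    (hu : |u| ≤ G1) (hv : |v| ≤ G1)
    (hp : |u| + |v| ≤ G1 + G2)
    (hE2 : 0 ≤ E2) (hE12 : E2 ≤ E1) (hEW : 2*W ≤ E1)
    (hEsum : 2*O + 2*W ≤ E1 + E2)
    (hD : 0 ≤ D) (hDO : D ≤ O) (hW0 : 0 ≤ W) :
    (W + D) * |u + v| + (W - D) * |u - v| ≤ G1 * E1 + G2 * E2 := by
  set M := max |u| |v| with hM
  set m := min |u| |v| with hm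
  have hMG : M ≤ G1 := max_le hu hv
  have hm0 : 0 ≤ m := le_min (abs_nonneg _) (abs_nonneg _)
  have hmM : m ≤ M := min_le_max
  have hMm : M + m = |u| + |v| := max_add_min _ _
  have habs : ∀ x : ℝ, x ≤ |x| ∧ -x ≤ |x| := fun x => ⟨le_abs_self x, neg_le_abs x⟩
  have hMu : |u| ≤ M := le_max_left _ _
  have hMv : |v| ≤ M := le_max_right _ _
  have hPQ1 : |u + v| + |u - v| ≤ 2 * M := by
    rcases abs_cases (u + v) with ⟨h3, _⟩ | ⟨h3, _⟩ <;>
      rcases abs_cases (u - v) with ⟨h4, _⟩ | ⟨h4, _⟩ <;>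
      linarith [(habs u).1, (habs u).2, (habs v).1, (habs v).2]
  have hPQ2 : |u + v| - |u - v| ≤ 2 * m := by
    rcases abs_cases (u + v) with ⟨h3, h3'⟩ | ⟨h3, h3'⟩ <;>
      rcases abs_cases (u - v) with ⟨h4, h4'⟩ | ⟨h4, h4'⟩
    · have : v ≤ m := le_min (by linarith [(habs u).1]) (le_abs_self v)
      linarith
    · have : u ≤ m := le_min (le_abs_self u) (by linarith [(habs v).1])
      linarith
    · have : -u ≤ m := le_min (neg_le_abs u) (by linarith [(habs v).2])
      linarith
    · have : -v ≤ m := le_min (by linarith [(habs u).2]) (neg_le_abs v)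
      linarith
  have step1 : M * E1 + m * E2 ≤ G1 * E1 + G2 * E2 := by
    have p1 : 0 ≤ (G1 - M) * (E1 - E2) := mul_nonneg (by linarith) (by linarith)
    have p2 : 0 ≤ (G1 + G2 - M - m) * E2 := mul_nonneg (by linarith) hE2
    nlinarith [p1, p2]
  have step2 : 2*W*M + 2*O*m ≤ M * E1 + m * E2 := by
    have q1 : 0 ≤ m * (E1 + E2 - 2*O - 2*W) := mul_nonneg hm0 (by linarith)
    have q2 : 0 ≤ (M - m) * (E1 - 2*W) := mul_nonneg (by linarith) (by linarith)
    nlinarith [q1, q2]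
  have step3 : (W + D) * |u + v| + (W - D) * |u - v| ≤ 2*W*M + 2*O*m := by
    have r1 : 0 ≤ W * (2*M - (|u + v| + |u - v|)) := mul_nonneg hW0 (by linarith)
    have r2 : 0 ≤ D * (2*m - (|u + v| - |u - v|)) := mul_nonneg hD (by linarith)
    have r3 : 0 ≤ (O - D) * m := mul_nonneg (by linarith) hm0
    nlinarith [r1, r2, r3]
  linarith

/-- Theorem 2, X-state form: for an X-state `ρ`, the total capacity
dominates the sum of the battery and charger capacities. -/
theorem stmt_18 (ωb ωc J1 J2 : ℝ) (hω : ωb ≥ ωc) (hωc : 0 < ωc) (hJ1 : J1 ≠ 0)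
    (Δ Ω : ℝ) (hΔ : Δ = ωb - ωc) (hΩ : Ω = Real.sqrt (J1 ^ 2 + Δ ^ 2))
    (ρ : Matrix (Fin 4) (Fin 4) ℂ)
    (hHerm : ρ.IsHermitian) (hPSD : ρ.PosSemidef) (htr : ρ.trace = 1)
    (hX12 : ρ 0 1 = 0) (hX13 : ρ 0 2 = 0) (hX24 : ρ 1 3 = 0) (hX34 : ρ 2 3 = 0)
    (hX21 : ρ 1 0 = 0) (hX31 : ρ 2 0 = 0) (hX42 : ρ 3 1 = 0) (hX43 : ρ 3 2 = 0)
    (lam1 lam2 lam3 lam4 : ℝ)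
    (hlam : lam1 ≤ lam2 ∧ lam2 ≤ lam3 ∧ lam3 ≤ lam4)
    (hlamms : ({lam1, lam2, lam3, lam4} : Multiset ℝ) =
      Multiset.map hHerm.eigenvalues Finset.univ.val)
    (ε1 ε2 ε3 ε4 : ℝ)
    (hε : ε1 ≤ ε2 ∧ ε2 ≤ ε3 ∧ ε3 ≤ ε4)
    (hεms : ({ε1, ε2, ε3, ε4} : Multiset ℝ) =
      {Ω - J2, -Ω - J2, J2 + (ωb + ωc), J2 - (ωb + ωc)}) :
    (lam4 - lam1) * (ε4 - ε1) + (lam3 - lam2) * (ε3 - ε2) ≥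
      2 * ωb * |(ρ 0 0).re + (ρ 1 1).re - (ρ 2 2).re - (ρ 3 3).re| +
      2 * ωc * |(ρ 0 0).re + (ρ 2 2).re - (ρ 1 1).re - (ρ 3 3).re| := by
  obtain ⟨h12, h23, h34⟩ := hlam
  obtain ⟨g12, g23, g34⟩ := hε
  set W : ℝ := ωb + ωc with hWdef
  set D : ℝ := ωb - ωc with hDdef
  -- basic facts about Ω, Δ
  have hD0 : 0 ≤ D := by simp [hDdef]; linarith
  have hW0 : 0 ≤ W := by simp [hWdef]; linarith
  have hDO : D ≤ Ω := by
    have h1 : Real.sqrt (Δ ^ 2) ≤ Ω := by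
      rw [hΩ]; exact Real.sqrt_le_sqrt (by nlinarith [sq_nonneg J1])
    rw [Real.sqrt_sq_eq_abs] at h1
    calc D ≤ |D| := le_abs_self D
      _ = |Δ| := by rw [hΔ]
      _ ≤ Ω := h1
  -- spectral decomposition facts
  set e : Fin 4 → ℝ := hHerm.eigenvalues with he
  set U : Matrix (Fin 4) (Fin 4) ℂ := (hHerm.eigenvectorUnitary : Matrix (Fin 4) (Fin 4) ℂ)
    with hUdef
  set w : Fin 4 → Fin 4 → ℝ := fun i k => Complex.normSq (U i k) with hwdef
  have hw : ∀ i k, 0 ≤ w i k := fun i k => Complex.normSq_nonneg _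
  have hdiag : ∀ i, (ρ i i).re = ∑ k, w i k * e k := by
    intro i
    have h : ρ i i = ∑ k, ((Complex.normSq (U i k) * hHerm.eigenvalues k : ℝ) : ℂ) := by
      conv_lhs => rw [hHerm.spectral_theorem, Unitary.conjStarAlgAut_apply]
      rw [← hUdef, Matrix.mul_apply]
      refine Finset.sum_congr rfl fun k _ => ?_
      rw [Matrix.mul_diagonal, Matrix.star_apply, mul_right_comm, Complex.star_def,
        Complex.mul_conj]
      simp [Function.comp]
    rw [h, Complex.re_sum]
    simp [hwdef, he]
  have hU2 : star U * U = 1 := Matrix.mem_unitaryGroup_iff'.mp hHerm.eigenvectorUnitary.2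
  have hU1 : U * star U = 1 := Matrix.mem_unitaryGroup_iff.mp hHerm.eigenvectorUnitary.2
  have hcol : ∀ k, w 0 k + w 1 k + w 2 k + w 3 k = 1 := by
    intro k
    have h := congrFun (congrFun hU2 k) k
    rw [Matrix.mul_apply] at h
    simp only [Matrix.star_apply, Complex.star_def, Matrix.one_apply_eq] at h
    have h2 : (∑ i, ((Complex.normSq (U i k) : ℝ) : ℂ)) = 1 := by
      rw [← h]
      exact Finset.sum_congr rfl fun i _ => by rw [Complex.normSq_eq_conj_mul_self]
    have h3 := congrArg Complex.re h2
    rw [Complex.re_sum] at h3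
    simp only [Complex.ofReal_re, Complex.one_re, Fin.sum_univ_four] at h3
    simpa [hwdef] using h3
  have hrow : ∀ i, w i 0 + w i 1 + w i 2 + w i 3 = 1 := by
    intro i
    have h := congrFun (congrFun hU1 i) i
    rw [Matrix.mul_apply] at h
    simp only [Matrix.star_apply, Complex.star_def, Matrix.one_apply_eq] at h
    have h2 : (∑ k, ((Complex.normSq (U i k) : ℝ) : ℂ)) = 1 := by
      rw [← h]
      exact Finset.sum_congr rfl fun k _ => by rw [Complex.mul_conj]
    have h3 := congrArg Complex.re h2
    rw [Complex.re_sum] at h3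
    simp only [Complex.ofReal_re, Complex.one_re, Fin.sum_univ_four] at h3
    simpa [hwdef] using h3
  -- eigenvalue multiset facts
  have hmemL : ∀ k, lam1 ≤ e k ∧ e k ≤ lam4 := by
    intro k
    have hmem : e k ∈ ({lam1, lam2, lam3, lam4} : Multiset ℝ) := by
      rw [hlamms]; exact Multiset.mem_map_of_mem e (Finset.mem_univ k)
    simp only [Multiset.insert_eq_cons, Multiset.mem_cons, Multiset.mem_singleton] at hmem
    rcases hmem with h | h | h | h <;> rw [h] <;> constructor <;> linarith
  set μL : ℝ := (lam2 + lam3) / 2 with hμL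
  have habsL : ∑ k, |e k - μL| ≤ lam3 + lam4 - lam1 - lam2 := by
    have h2 := congrArg (fun s : Multiset ℝ => (s.map (fun x => |x - μL|)).sum) hlamms
    simp only [Multiset.insert_eq_cons, Multiset.map_cons, Multiset.sum_cons,
      Multiset.map_singleton, Multiset.sum_singleton, Multiset.map_map, Function.comp] at h2
    rw [Finset.sum]
    rw [abs_of_nonpos (by linarith : lam1 - μL ≤ 0), abs_of_nonpos (by linarith : lam2 - μL ≤ 0),
      abs_of_nonneg (by linarith : (0:ℝ) ≤ lam3 - μL),
      abs_of_nonneg (by linarith : (0:ℝ) ≤ lam4 - μL)] at h2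
    rw [← h2]
    linarith
  set μ1 : ℝ := (lam1 + lam4) / 2 with hμ1
  have hR0 : 0 ≤ (lam4 - lam1) / 2 := by linarith
  have habs1 : ∀ k, |e k - μ1| ≤ (lam4 - lam1) / 2 := by
    intro k
    have := hmemL k
    rw [abs_le]; constructor <;> [linarith [this.1]; linarith [this.2]]
  -- bounds on u, v
  set u : ℝ := (ρ 0 0).re - (ρ 3 3).re with hu'
  set v : ℝ := (ρ 1 1).re - (ρ 2 2).re with hv'
  have hcw : ∀ a b k : Fin 4, |w a k - w b k| ≤ w a k + w b k := by
    intro a b k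
    rw [abs_le]
    constructor <;> linarith [hw a k, hw b k]
  have hbound2 : ∀ c b : Fin 4 → ℝ, (∀ k, |c k| ≤ b k) → (∑ k, c k = 0) → (∑ k, b k = 2) →
      ∑ k, c k * e k ≤ lam4 - lam1 := by
    intro c b hc h0 hb
    have := sum4_bound2 e c b μ1 ((lam4 - lam1) / 2) hR0 hc habs1 h0 hb
    linarith
  have hvu : |u| ≤ lam4 - lam1 ∧ |v| ≤ lam4 - lam1 := by
    constructor
    · rw [abs_le]; constructor
      · have heq : -u = ∑ k, (w 3 k - w 0 k) * e k := by
          rw [hu', hdiag 0, hdiag 3]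
          simp only [Fin.sum_univ_four]; ring
        have := hbound2 (fun k => w 3 k - w 0 k) (fun k => w 3 k + w 0 k)
          (fun k => hcw 3 0 k)
          (by simp only [Fin.sum_univ_four]; linarith [hrow 0, hrow 3])
          (by simp only [Fin.sum_univ_four]; linarith [hrow 0, hrow 3])
        rw [← heq] at this; linarith
      · have heq : u = ∑ k, (w 0 k - w 3 k) * e k := by
          rw [hu', hdiag 0, hdiag 3]
          simp only [Fin.sum_univ_four]; ring
        rw [heq]
        exact hbound2 (fun k => w 0 k - w 3 k) (fun k => w 0 k + w 3 k)
          (fun k => hcw 0 3 k)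
          (by simp only [Fin.sum_univ_four]; linarith [hrow 0, hrow 3])
          (by simp only [Fin.sum_univ_four]; linarith [hrow 0, hrow 3])
    · rw [abs_le]; constructor
      · have heq : -v = ∑ k, (w 2 k - w 1 k) * e k := by
          rw [hv', hdiag 1, hdiag 2]
          simp only [Fin.sum_univ_four]; ring
        have := hbound2 (fun k => w 2 k - w 1 k) (fun k => w 2 k + w 1 k)
          (fun k => hcw 2 1 k)
          (by simp only [Fin.sum_univ_four]; linarith [hrow 1, hrow 2])
          (by simp only [Fin.sum_univ_four]; linarith [hrow 1, hrow 2])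
        rw [← heq] at this; linarith
      · have heq : v = ∑ k, (w 1 k - w 2 k) * e k := by
          rw [hv', hdiag 1, hdiag 2]
          simp only [Fin.sum_univ_four]; ring
        rw [heq]
        exact hbound2 (fun k => w 1 k - w 2 k) (fun k => w 1 k + w 2 k)
          (fun k => hcw 1 2 k)
          (by simp only [Fin.sum_univ_four]; linarith [hrow 1, hrow 2])
          (by simp only [Fin.sum_univ_four]; linarith [hrow 1, hrow 2])
  have hbound1 : ∀ c : Fin 4 → ℝ, (∀ k, |c k| ≤ 1) → (∑ k, c k = 0) →
      ∑ k, c k * e k ≤ lam3 + lam4 - lam1 - lam2 :=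
    fun c hc h0 => sum4_bound e c μL _ hc h0 habsL
  have hsumabs : |u| + |v| ≤ (lam4 - lam1) + (lam3 - lam2) := by
    have hgen : ∀ s t : ℝ, (s = 1 ∨ s = -1) → (t = 1 ∨ t = -1) →
        s * u + t * v ≤ lam3 + lam4 - lam1 - lam2 := by
      intro s t hs ht
      have heq : s * u + t * v = ∑ k,
          ((s * (w 0 k - w 3 k) + t * (w 1 k - w 2 k)) * e k) := by
        rw [hu', hv', hdiag 0, hdiag 1, hdiag 2, hdiag 3]
        simp only [Fin.sum_univ_four]; ring
      rw [heq]
      refine hbound1 _ (fun k => ?_) ?_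
      · show |s * (w 0 k - w 3 k) + t * (w 1 k - w 2 k)| ≤ 1
        have h0 := hw 0 k; have h1 := hw 1 k; have h2 := hw 2 k; have h3 := hw 3 k
        have hc := hcol k
        rcases hs with hs | hs <;> rcases ht with ht | ht <;> rw [hs, ht] <;>
          rw [abs_le] <;> constructor <;> linarith
      · simp only [Fin.sum_univ_four]
        have e0 := hrow 0; have e1 := hrow 1; have e2 := hrow 2; have e3 := hrow 3
        rcases hs with hs | hs <;> rcases ht with ht | ht <;> rw [hs, ht] <;> linarith
    have h1 := hgen 1 1 (Or.inl rfl) (Or.inl rfl)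
    have h2 := hgen 1 (-1) (Or.inl rfl) (Or.inr rfl)
    have h3 := hgen (-1) 1 (Or.inr rfl) (Or.inl rfl)
    have h4 := hgen (-1) (-1) (Or.inr rfl) (Or.inr rfl)
    rcases abs_cases u with ⟨hau, _⟩ | ⟨hau, _⟩ <;> rcases abs_cases v with ⟨hav, _⟩ | ⟨hav, _⟩ <;>
      linarith
  -- ε facts
  have hεmem : ∀ x : ℝ, x ∈ ({Ω - J2, -Ω - J2, J2 + (ωb + ωc), J2 - (ωb + ωc)} : Multiset ℝ) →
      ε1 ≤ x ∧ x ≤ ε4 := by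
    intro x hx
    rw [← hεms] at hx
    simp only [Multiset.insert_eq_cons, Multiset.mem_cons, Multiset.mem_singleton] at hx
    rcases hx with h | h | h | h <;> rw [h] <;> constructor <;> linarith
  have hE4 : ε1 ≤ J2 + (ωb + ωc) ∧ J2 + (ωb + ωc) ≤ ε4 := hεmem _ (by simp)
  have hE1 : ε1 ≤ J2 - (ωb + ωc) ∧ J2 - (ωb + ωc) ≤ ε4 := hεmem _ (by simp)
  have hEW : 2 * W ≤ ε4 - ε1 := by rw [hWdef]; linarith [hE4.2, hE1.1]
  set μE : ℝ := (ε2 + ε3) / 2 with hμE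
  have hEsum : 2 * Ω + 2 * W ≤ (ε4 - ε1) + (ε3 - ε2) := by
    have h2 := congrArg (fun s : Multiset ℝ => (s.map (fun x => |x - μE|)).sum) hεms
    simp only [Multiset.insert_eq_cons, Multiset.map_cons, Multiset.sum_cons,
      Multiset.map_singleton, Multiset.sum_singleton] at h2
    rw [abs_of_nonpos (by linarith : ε1 - μE ≤ 0), abs_of_nonpos (by linarith : ε2 - μE ≤ 0),
      abs_of_nonneg (by linarith : (0:ℝ) ≤ ε3 - μE),
      abs_of_nonneg (by linarith : (0:ℝ) ≤ ε4 - μE)] at h2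
    have a1 := le_abs_self (Ω - J2 - μE)
    have a2 := neg_le_abs (-Ω - J2 - μE)
    have a3 := le_abs_self (J2 + (ωb + ωc) - μE)
    have a4 := neg_le_abs (J2 - (ωb + ωc) - μE)
    rw [hWdef]
    linarith
  -- conclude
  have hkey := key_ineq (lam4 - lam1) (lam3 - lam2) (ε4 - ε1) (ε3 - ε2) W D Ω u v
    (by linarith) hvu.1 hvu.2 hsumabs (by linarith) (by linarith) hEW hEsum hD0 hDO hW0
  have hP : (ρ 0 0).re + (ρ 1 1).re - (ρ 2 2).re - (ρ 3 3).re = u + v := by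
    rw [hu', hv']; ring
  have hQ : (ρ 0 0).re + (ρ 2 2).re - (ρ 1 1).re - (ρ 3 3).re = u - v := by
    rw [hu', hv']; ring
  rw [hP, hQ, ge_iff_le]
  have hb : 2 * ωb = W + D := by rw [hWdef, hDdef]; ring
  have hc2 : 2 * ωc = W - D := by rw [hWdef, hDdef]; ring
  calc 2 * ωb * |u + v| + 2 * ωc * |u - v|
      = (W + D) * |u + v| + (W - D) * |u - v| := by rw [hb, hc2]
    _ ≤ (lam4 - lam1) * (ε4 - ε1) + (lam3 - lam2) * (ε3 - ε2) := hkey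
end

section
/- (Appendix B) Let γ ∈ [0,1] and let Υ be the dephasing channel with Kraus operators K₁ = (1 − γ) I⊗I, K₂ = √(γ(1 − γ)) I⊗σ_z, K₃ = √(γ(1 − γ)) σ_z⊗I, K₄ = γ σ_z⊗σ_z. Then for every real time t, the noisy state ρ̃(t) = Σ_{i=1}^{4} K_i |ψ(t)⟩⟨ψ(t)| K_i† is the 4×4 matrix whose only nonzero entries are ρ̃₂₂ = |α(t)|², ρ̃₃₃ = |β(t)|², ρ̃₂₃ = (1 − 2γ)² α(t)β(t)*, ρ̃₃₂ = (1 − 2γ)² α(t)*β(t); in particular the battery reduced state is unchanged, and for γ ≠ 1/2 the battery capacity and the noisy entanglement Ẽ(t) := 2(1 − 2γ)²|α(t)||β(t)| satisfy C_b(t) = 2 ω_b √(1 − Ẽ(t)²/(1 − 2γ)⁴). -/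
open Complex Matrix Kronecker

/-- Appendix B: dephasing noise leaves the populations unchanged, multiplies
the coherences by `(1−2γ)²`, and for `γ ≠ 1/2` the battery capacity satisfies
`C_b = 2ω_b √(1 − Ẽ²/(1−2γ)⁴)` with `Ẽ = 2(1−2γ)²|α||β|`. -/
theorem stmt_19 (ωb ωc J1 J2 t : ℝ) (hωb : 0 < ωb) (hωc : 0 < ωc) (hJ1 : J1 ≠ 0)
    (Δ Ω e1 e2 ξ1 ξ2 p : ℝ) (α β : ℂ)
    (hΔ : Δ = ωb - ωc) (hΩ : Ω = Real.sqrt (J1 ^ 2 + Δ ^ 2))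
    (he1 : e1 = Ω - J2) (he2 : e2 = -Ω - J2)
    (hξ1 : ξ1 = (Δ + Ω) / J1) (hξ2 : ξ2 = (Δ - Ω) / J1)
    (hα : α = (Complex.exp (-Complex.I * ((e1 * t : ℝ) : ℂ)) * (ξ1 : ℂ) -
        Complex.exp (-Complex.I * ((e2 * t : ℝ) : ℂ)) * (ξ2 : ℂ)) / ((ξ1 : ℂ) - (ξ2 : ℂ)))
    (hβ : β = (Complex.exp (-Complex.I * ((e1 * t : ℝ) : ℂ)) -
        Complex.exp (-Complex.I * ((e2 * t : ℝ) : ℂ))) / ((ξ1 : ℂ) - (ξ2 : ℂ)))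
    (hp : p = ‖α‖ ^ 2)
    (Cb : ℝ) (hCb : Cb = 2 * ωb * |1 - 2 * p|)
    (γ : ℝ) (hγ : 0 ≤ γ ∧ γ ≤ 1)
    (ψ : Fin 2 × Fin 2 → ℂ)
    (hψ : ψ = fun x => if x = (0, 1) then α else if x = (1, 0) then β else 0)
    (σz : Matrix (Fin 2) (Fin 2) ℂ) (hσz : σz = !![1, 0; 0, -1])
    (K : Fin 4 → Matrix (Fin 2 × Fin 2) (Fin 2 × Fin 2) ℂ)
    (hK : K = ![((1 - γ : ℝ) : ℂ) • ((1 : Matrix (Fin 2) (Fin 2) ℂ) ⊗ₖ (1 : Matrix (Fin 2) (Fin 2) ℂ)),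
                ((Real.sqrt (γ * (1 - γ)) : ℝ) : ℂ) • ((1 : Matrix (Fin 2) (Fin 2) ℂ) ⊗ₖ σz),
                ((Real.sqrt (γ * (1 - γ)) : ℝ) : ℂ) • (σz ⊗ₖ (1 : Matrix (Fin 2) (Fin 2) ℂ)),
                ((γ : ℝ) : ℂ) • (σz ⊗ₖ σz)])
    (ρnoisy : Matrix (Fin 2 × Fin 2) (Fin 2 × Fin 2) ℂ)
    (hρnoisy : ρnoisy = ∑ i : Fin 4, K i * (Matrix.of fun i j => ψ i * star (ψ j)) * (K i)ᴴ)
    (Et : ℝ) (hEt : Et = 2 * (1 - 2 * γ) ^ 2 * ‖α‖ * ‖β‖) :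
    ρnoisy = Matrix.of (fun i j =>
        (if i = j then 1 else ((1 - 2 * γ : ℝ) : ℂ) ^ 2) * (ψ i * star (ψ j))) ∧
    (Matrix.of fun a a' : Fin 2 => ∑ b : Fin 2, ρnoisy (a, b) (a', b)) =
        !![(p : ℂ), 0; 0, 1 - (p : ℂ)] ∧
    (γ ≠ 1 / 2 → Cb = 2 * ωb * Real.sqrt (1 - Et ^ 2 / (1 - 2 * γ) ^ 4)) := by
  -- ### The normalization identity |α|² + |β|² = 1
  have habs : ‖α‖ ^ 2 + ‖β‖ ^ 2 = 1 := by
    have hΩpos : 0 < Ω := by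
      rw [hΩ]; positivity
    have hΩsq : Ω ^ 2 = J1 ^ 2 + Δ ^ 2 := by
      rw [hΩ, Real.sq_sqrt]; positivity
    have hξξ : ξ1 * ξ2 = -1 := by
      rw [hξ1, hξ2]; field_simp; nlinarith
    have hne : ξ1 - ξ2 ≠ 0 := by
      rw [hξ1, hξ2]
      have : (Δ + Ω) / J1 - (Δ - Ω) / J1 = 2 * Ω / J1 := by ring
      rw [this]
      positivity
    have h1 : (-Complex.I * ((e1 * t : ℝ) : ℂ)) = ((-(e1*t) : ℝ) : ℂ) * Complex.I := by
      push_cast; ring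
    have h2 : (-Complex.I * ((e2 * t : ℝ) : ℂ)) = ((-(e2*t) : ℝ) : ℂ) * Complex.I := by
      push_cast; ring
    have hs := Real.sin_sq_add_cos_sq (-(e1*t))
    have hs2 := Real.sin_sq_add_cos_sq (-(e2*t))
    rw [hα, hβ, h1, h2]
    simp only [Complex.exp_mul_I, Complex.sq_norm, Complex.normSq_div,
      ← Complex.ofReal_cos, ← Complex.ofReal_sin]
    rw [← add_div]
    have hA : ((Real.cos (-(e1*t)) : ℂ) + (Real.sin (-(e1*t)) : ℂ) * Complex.I) * (ξ1:ℂ) -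
        ((Real.cos (-(e2*t)) : ℂ) + (Real.sin (-(e2*t)) : ℂ) * Complex.I) * (ξ2:ℂ) =
        ((Real.cos (-(e1*t)) * ξ1 - Real.cos (-(e2*t)) * ξ2 : ℝ) : ℂ) +
        ((Real.sin (-(e1*t)) * ξ1 - Real.sin (-(e2*t)) * ξ2 : ℝ) : ℂ) * Complex.I := by
      push_cast; ring
    have hB : ((Real.cos (-(e1*t)) : ℂ) + (Real.sin (-(e1*t)) : ℂ) * Complex.I) -
        ((Real.cos (-(e2*t)) : ℂ) + (Real.sin (-(e2*t)) : ℂ) * Complex.I) =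
        ((Real.cos (-(e1*t)) - Real.cos (-(e2*t)) : ℝ) : ℂ) +
        ((Real.sin (-(e1*t)) - Real.sin (-(e2*t)) : ℝ) : ℂ) * Complex.I := by
      push_cast; ring
    have hC : ((ξ1:ℂ) - ξ2) = ((ξ1 - ξ2 : ℝ) : ℂ) := by push_cast; ring
    rw [hA, hB, hC, Complex.normSq_add_mul_I, Complex.normSq_add_mul_I, Complex.normSq_ofReal]
    rw [div_eq_one_iff_eq (by positivity)]
    linear_combination (ξ1^2+1)*hs + (ξ2^2+1)*hs2 +
      (-2*(Real.cos (-(e1*t)) * Real.cos (-(e2*t)) + Real.sin (-(e1*t)) * Real.sin (-(e2*t))) + 2)*hξξ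
  -- ### Part 1: the noisy matrix
  have part1 : ρnoisy = Matrix.of (fun i j =>
      (if i = j then 1 else ((1 - 2 * γ : ℝ) : ℂ) ^ 2) * (ψ i * star (ψ j))) := by
    have hsq : ((Real.sqrt (γ * (1 - γ)) : ℝ) : ℂ) * ((Real.sqrt (γ * (1 - γ)) : ℝ) : ℂ)
        = ((γ : ℂ) * (1 - γ)) := by
      rw [← Complex.ofReal_mul, Real.mul_self_sqrt (by nlinarith [hγ.1, hγ.2])]
      push_cast; ring
    set s : ℂ := ((Real.sqrt (γ * (1 - γ)) : ℝ) : ℂ) with hsdef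
    set d1 : Fin 2 → ℂ := fun _ => 1 with hd1
    set dz : Fin 2 → ℂ := fun i => if i = 0 then 1 else -1 with hdz
    have hone : (1 : Matrix (Fin 2) (Fin 2) ℂ) = Matrix.diagonal d1 := by
      rw [hd1, Matrix.diagonal_one]
    have hσzd : σz = Matrix.diagonal dz := by
      rw [hσz, hdz]
      ext i j
      fin_cases i <;> fin_cases j <;> simp [Matrix.diagonal]
    set g : Fin 4 → Fin 2 × Fin 2 → ℂ :=
      ![((1 - γ : ℝ) : ℂ) • fun mn : Fin 2 × Fin 2 => d1 mn.1 * d1 mn.2,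
        s • fun mn : Fin 2 × Fin 2 => d1 mn.1 * dz mn.2,
        s • fun mn : Fin 2 × Fin 2 => dz mn.1 * d1 mn.2,
        ((γ : ℝ) : ℂ) • fun mn : Fin 2 × Fin 2 => dz mn.1 * dz mn.2] with hg
    have hKd : ∀ i, K i = Matrix.diagonal (g i) := by
      intro i
      fin_cases i
      · show K 0 = Matrix.diagonal (g 0)
        rw [hK, hg]
        simp only [Matrix.cons_val_zero]
        rw [hone, Matrix.diagonal_kronecker_diagonal, Matrix.diagonal_smul]
      · show K 1 = Matrix.diagonal (g 1)
        rw [hK, hg]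
        simp only [Matrix.cons_val_one, Matrix.head_cons, Matrix.cons_val_zero]
        rw [hone, hσzd, Matrix.diagonal_kronecker_diagonal, Matrix.diagonal_smul]
      · show K 2 = Matrix.diagonal (g 2)
        rw [hK, hg]
        simp only [Matrix.cons_val_two, Matrix.tail_cons, Matrix.head_cons]
        rw [hone, hσzd, Matrix.diagonal_kronecker_diagonal, Matrix.diagonal_smul]
      · show K 3 = Matrix.diagonal (g 3)
        rw [hK, hg]
        simp only [Matrix.cons_val_three, Matrix.tail_cons, Matrix.head_cons]
        rw [hσzd, Matrix.diagonal_kronecker_diagonal, Matrix.diagonal_smul]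
    have hρ : ∀ x y, ρnoisy x y = (∑ i : Fin 4, g i x * star (g i y)) * (ψ x * star (ψ y)) := by
      intro x y
      rw [hρnoisy, Matrix.sum_apply, Finset.sum_mul]
      refine Finset.sum_congr rfl fun i _ => ?_
      rw [hKd i, Matrix.diagonal_conjTranspose, Matrix.mul_diagonal, Matrix.diagonal_mul,
        Matrix.of_apply, Pi.star_apply]
      ring
    ext x y
    rw [hρ x y, Matrix.of_apply]
    obtain ⟨a, b⟩ := x; obtain ⟨c, d⟩ := y
    fin_cases a <;> fin_cases b <;> fin_cases c <;> fin_cases d <;>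
      simp only [hψ, hg, hd1, hdz, Fin.sum_univ_four, Prod.mk.injEq, Matrix.cons_val_zero,
        Matrix.cons_val_one, Matrix.head_cons, Matrix.cons_val_two, Matrix.cons_val_three,
        Matrix.tail_cons, Pi.smul_apply, smul_eq_mul, Prod.ext_iff] <;>
      norm_num [Complex.star_def, Complex.conj_ofReal]
    all_goals simp only [show (starRingEnd ℂ) s = s from Complex.conj_ofReal _, hsq]
    all_goals try left
    all_goals ring
  refine ⟨part1, ?_, ?_⟩
  -- ### Part 2: the battery reduced state
  · have hmcα : α * star α = ((p : ℝ) : ℂ) := by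
      rw [Complex.star_def, Complex.mul_conj, hp, Complex.sq_norm]
    have hmcβ : β * star β = ((1 - p : ℝ) : ℂ) := by
      rw [Complex.star_def, Complex.mul_conj]
      congr 1
      rw [← Complex.sq_norm]
      linarith [habs, hp]
    ext a c
    fin_cases a <;> fin_cases c <;>
      simp only [Matrix.of_apply, Fin.sum_univ_two, part1, hψ] <;>
      norm_num [Prod.ext_iff]
    · rw [Complex.mul_conj, hp, Complex.sq_norm]
    · rw [Complex.mul_conj, show ((1:ℂ) - (p:ℂ)) = ((1 - p : ℝ) : ℂ) by push_cast; ring]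
      norm_cast
      rw [← Complex.sq_norm]
      linarith [habs, hp]
  -- ### Part 3: the capacity formula
  · intro hγ2
    have hc : (1 - 2 * γ) ≠ 0 := by
      intro h; apply hγ2; linarith
    have hb2 : ‖β‖ ^ 2 = 1 - p := by linarith [habs, hp]
    have hdiv : Et ^ 2 / (1 - 2 * γ) ^ 4 = 4 * (p * (1 - p)) := by
      rw [hEt, div_eq_iff (by positivity)]
      linear_combination (-4*(1-2*γ)^4*‖β‖^2) * hp + (4*(1-2*γ)^4*p) * hb2
    rw [hCb, hdiv]
    have h1 : 1 - 4 * (p * (1 - p)) = (1 - 2 * p) ^ 2 := by ring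
    rw [h1, Real.sqrt_sq_eq_abs]
end
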